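/- arXiv:2506.06814 — 8 statements merged into one kernel-verified Lean document; each statement's English description precedes it below -/
import Mathlib

section
/- Consider a point particle of charge q and rest mass m in the electromagnetic field E(t,x) = ε⊥(ct − z) + E^z(t,z) e_z, B(t,x) = e_z × ε⊥(ct − z), where ε⊥ : ℝ → ℝ³ is continuous with vanishing third component and E^z : ℝ² → ℝ is continuous. Suppose t ↦ (x(t), u(t)) solves du/dt = (q/(mc))[E(t,x(t)) + (u/γ) × B(t,x(t))] and dx/dt = c u/γ, with γ = √(1+|u|²). Let ξ̃(t) = ct − z(t), which is strictly increasing, let t̂ be its inverse, and set û⊥(ξ) := u⊥(t̂(ξ)) (the first two components of u). Then û⊥ is differentiable and dû⊥/dξ = (q/(mc²)) ε⊥(ξ); in particular, if u⊥(t₀) = 0 then û⊥(ξ) = (q/(mc²)) ∫_{ξ̃(t₀)}^{ξ} ε⊥(ζ) dζ. -/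
open Set Filter

/-- Derivative of the inverse of a strictly monotone real function, within the range. -/
lemma inv_hasDerivWithinAt_aux {φ ψ : ℝ → ℝ} (hψφ : ∀ t, ψ (φ t) = t)
    (hmono : StrictMono φ) {t d : ℝ} (hd : d ≠ 0)
    (hφd : HasDerivAt φ d t) :
    HasDerivWithinAt ψ d⁻¹ (Set.range φ) (φ t) := by
  have hconv : Tendsto ψ (nhdsWithin (φ t) (Set.range φ)) (nhds t) := by
    rw [tendsto_order]
    constructor
    · intro a ha
      have hsub : Set.range φ ∩ Set.Ioi (φ a) ⊆ {ξ | a < ψ ξ} := by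
        rintro ξ ⟨⟨s, rfl⟩, h1⟩
        simp only [Set.mem_setOf_eq, hψφ]
        exact hmono.lt_iff_lt.mp h1
      exact mem_of_superset (inter_mem_nhdsWithin _ (Ioi_mem_nhds (hmono ha))) hsub
    · intro b hb
      have hsub : Set.range φ ∩ Set.Iio (φ b) ⊆ {ξ | ψ ξ < b} := by
        rintro ξ ⟨⟨s, rfl⟩, h1⟩
        simp only [Set.mem_setOf_eq, hψφ]
        exact hmono.lt_iff_lt.mp h1
      exact mem_of_superset (inter_mem_nhdsWithin _ (Iio_mem_nhds (hmono hb))) hsub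
  have hne : ∀ᶠ ξ in nhdsWithin (φ t) (Set.range φ \ {φ t}), ψ ξ ≠ t := by
    filter_upwards [self_mem_nhdsWithin] with ξ hξ
    obtain ⟨⟨s, rfl⟩, h2⟩ := hξ
    rw [hψφ]
    rintro rfl
    exact h2 rfl
  have hconv' : Tendsto ψ (nhdsWithin (φ t) (Set.range φ \ {φ t})) (nhdsWithin t {t}ᶜ) :=
    tendsto_nhdsWithin_iff.2 ⟨hconv.mono_left (nhdsWithin_mono _ diff_subset), hne⟩
  have hslope := hasDerivAt_iff_tendsto_slope.mp hφd
  rw [hasDerivWithinAt_iff_tendsto_slope]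
  refine Filter.Tendsto.congr' ?_ ((hslope.comp hconv').inv₀ hd)
  filter_upwards [self_mem_nhdsWithin] with ξ hξ
  obtain ⟨⟨s, rfl⟩, h2⟩ := hξ
  simp only [Function.comp_apply, slope_def_field, hψφ]
  rw [inv_div]

/-- For a charge in the field of a transverse plane travelling wave `ε⊥(ct-z)`
(with `B = e_z × ε⊥`) plus a longitudinal field `E^z(t,z) e_z`, the transverse
4-velocity as a function of `ξ = ct - z` satisfies `dû⊥/dξ = (q/(mc²)) ε⊥(ξ)`;
in particular if `u⊥(t₀) = 0` then `û⊥(ξ) = (q/(mc²)) ∫_{ξ̃(t₀)}^{ξ} ε⊥`. -/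
theorem stmt_3 (q m c : ℝ) (hm : 0 < m) (hc : 0 < c)
    (ε1 ε2 : ℝ → ℝ) (hε1 : Continuous ε1) (hε2 : Continuous ε2)
    (Ez : ℝ → ℝ → ℝ) (hEz : Continuous fun p : ℝ × ℝ => Ez p.1 p.2)
    (x1 x2 x3 u1 u2 u3 γ : ℝ → ℝ)
    (hγ : ∀ t, γ t = Real.sqrt (1 + ((u1 t) ^ 2 + (u2 t) ^ 2 + (u3 t) ^ 2)))
    (hx1 : ∀ t, HasDerivAt x1 (c * u1 t / γ t) t)
    (hx2 : ∀ t, HasDerivAt x2 (c * u2 t / γ t) t)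
    (hx3 : ∀ t, HasDerivAt x3 (c * u3 t / γ t) t)
    (hu1 : ∀ t, HasDerivAt u1
      (q / (m * c) * (ε1 (c * t - x3 t) - u3 t * ε1 (c * t - x3 t) / γ t)) t)
    (hu2 : ∀ t, HasDerivAt u2
      (q / (m * c) * (ε2 (c * t - x3 t) - u3 t * ε2 (c * t - x3 t) / γ t)) t)
    (hu3 : ∀ t, HasDerivAt u3
      (q / (m * c) * (Ez t (x3 t)
        + (u1 t * ε1 (c * t - x3 t) + u2 t * ε2 (c * t - x3 t)) / γ t)) t)
    (that : ℝ → ℝ) (hthat : ∀ t, that (c * t - x3 t) = t) :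
    StrictMono (fun t : ℝ => c * t - x3 t) ∧
    (∀ t : ℝ,
      HasDerivWithinAt (fun ξ => u1 (that ξ)) (q / (m * c ^ 2) * ε1 (c * t - x3 t))
        (Set.range fun τ : ℝ => c * τ - x3 τ) (c * t - x3 t) ∧
      HasDerivWithinAt (fun ξ => u2 (that ξ)) (q / (m * c ^ 2) * ε2 (c * t - x3 t))
        (Set.range fun τ : ℝ => c * τ - x3 τ) (c * t - x3 t)) ∧
    (∀ t₀ t : ℝ, u1 t₀ = 0 → u2 t₀ = 0 →
      u1 t = q / (m * c ^ 2) * ∫ ζ in (c * t₀ - x3 t₀)..(c * t - x3 t), ε1 ζ ∧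
      u2 t = q / (m * c ^ 2) * ∫ ζ in (c * t₀ - x3 t₀)..(c * t - x3 t), ε2 ζ) := by
  have hγpos : ∀ t, 0 < γ t := by
    intro t
    rw [hγ]
    exact Real.sqrt_pos.2 (by positivity)
  have hu3lt : ∀ t, u3 t < γ t := by
    intro t
    have h1 : (γ t) ^ 2 = 1 + ((u1 t) ^ 2 + (u2 t) ^ 2 + (u3 t) ^ 2) := by
      rw [hγ]; exact Real.sq_sqrt (by positivity)
    nlinarith [hγpos t, sq_nonneg (u1 t), sq_nonneg (u2 t), sq_nonneg (γ t - u3 t)]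
  have hφd : ∀ t, HasDerivAt (fun τ : ℝ => c * τ - x3 τ) (c - c * u3 t / γ t) t := by
    intro t
    have h1 : HasDerivAt (fun τ : ℝ => c * τ) c t := by
      simpa using (hasDerivAt_id t).const_mul c
    exact h1.sub (hx3 t)
  have hdpos : ∀ t, 0 < c - c * u3 t / γ t := by
    intro t
    have h1 : u3 t / γ t < 1 := (div_lt_one (hγpos t)).2 (hu3lt t)
    have : c * u3 t / γ t = c * (u3 t / γ t) := by ring
    nlinarith
  have hmono : StrictMono (fun t : ℝ => c * t - x3 t) :=
    strictMono_of_deriv_pos fun t => by rw [(hφd t).deriv]; exact hdpos t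
  have key : ∀ (e : ℝ) (t : ℝ),
      q / (m * c) * (e - u3 t * e / γ t)
        = q / (m * c ^ 2) * e * (c - c * u3 t / γ t) := by
    intro e t
    have hg := (hγpos t).ne'
    field_simp
  refine ⟨hmono, ?_, ?_⟩
  · intro t
    constructor
    · have hu1' : HasDerivAt u1
          (q / (m * c) * (ε1 (c * t - x3 t) - u3 t * ε1 (c * t - x3 t) / γ t))
          (that (c * t - x3 t)) := by rw [hthat]; exact hu1 t
      have hψd := inv_hasDerivWithinAt_aux hthat hmono (hdpos t).ne' (hφd t)
      have hcomp := hu1'.comp_hasDerivWithinAt (c * t - x3 t) hψd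
      have heq : q / (m * c) * (ε1 (c * t - x3 t) - u3 t * ε1 (c * t - x3 t) / γ t)
          * (c - c * u3 t / γ t)⁻¹ = q / (m * c ^ 2) * ε1 (c * t - x3 t) := by
        rw [key, mul_assoc, mul_inv_cancel₀ (hdpos t).ne', mul_one]
      rw [heq] at hcomp
      exact hcomp
    · have hu2' : HasDerivAt u2
          (q / (m * c) * (ε2 (c * t - x3 t) - u3 t * ε2 (c * t - x3 t) / γ t))
          (that (c * t - x3 t)) := by rw [hthat]; exact hu2 t
      have hψd := inv_hasDerivWithinAt_aux hthat hmono (hdpos t).ne' (hφd t)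
      have hcomp := hu2'.comp_hasDerivWithinAt (c * t - x3 t) hψd
      have heq : q / (m * c) * (ε2 (c * t - x3 t) - u3 t * ε2 (c * t - x3 t) / γ t)
          * (c - c * u3 t / γ t)⁻¹ = q / (m * c ^ 2) * ε2 (c * t - x3 t) := by
        rw [key, mul_assoc, mul_inv_cancel₀ (hdpos t).ne', mul_one]
      rw [heq] at hcomp
      exact hcomp
  · intro t₀ t h10 h20
    have part3 : ∀ (u ε : ℝ → ℝ), Continuous ε →
        (∀ s, HasDerivAt u
          (q / (m * c) * (ε (c * s - x3 s) - u3 s * ε (c * s - x3 s) / γ s)) s) →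
        u t₀ = 0 →
        u t = q / (m * c ^ 2) * ∫ ζ in (c * t₀ - x3 t₀)..(c * t - x3 t), ε ζ := by
      intro u ε hε hud hu0
      have hFd : ∀ s, HasDerivAt
          (fun s => u s - q / (m * c ^ 2)
            * ∫ ζ in (c * t₀ - x3 t₀)..(c * s - x3 s), ε ζ) 0 s := by
        intro s
        have hI : HasDerivAt (fun ξ => ∫ ζ in (c * t₀ - x3 t₀)..ξ, ε ζ)
            (ε (c * s - x3 s)) (c * s - x3 s) :=
          (hε.integral_hasStrictDerivAt (c * t₀ - x3 t₀) _).hasDerivAt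
        have hcomp := hI.comp s (hφd s)
        have hder := (hud s).sub (hcomp.const_mul (q / (m * c ^ 2)))
        convert hder using 1
        · rfl
        · rfl
        · rfl
        rw [key]
        ring
      have hconst := is_const_of_deriv_eq_zero
        (fun s => (hFd s).differentiableAt) (fun s => (hFd s).deriv) t t₀
      rw [hu0, intervalIntegral.integral_same, mul_zero, sub_zero] at hconst
      linarith
    exact ⟨part3 u1 ε1 hε1 hu1 h10, part3 u2 ε2 hε2 hu2 h20⟩
end

section
/- Consider a point particle of charge q and rest mass m in the electromagnetic field E(t,x) = ε⊥(ct − z) + E^z(t,z) e_z, B(t,x) = e_z × ε⊥(ct − z), where ε⊥ : ℝ → ℝ³ is continuous with vanishing third component and E^z : ℝ² → ℝ is continuous. Suppose t ↦ (x(t), u(t)) solves du/dt = (q/(mc))[E(t,x(t)) + (u/γ) × B(t,x(t))] and dx/dt = c u/γ, with γ = √(1+|u|²). Let ξ̃(t) = ct − z(t) with inverse t̂, and set ẑ(ξ) := z(t̂(ξ)), û⊥(ξ) := u⊥(t̂(ξ)), ŝ(ξ) := γ(t̂(ξ)) − u_z(t̂(ξ)), v(ξ) := |û⊥(ξ)|².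 Then dẑ/dξ = (1 + v(ξ))/(2 ŝ(ξ)²) − 1/2 and dŝ/dξ = −(q/(mc²)) E^z(t̂(ξ), ẑ(ξ)). -/
open Set Filter Topology

lemma key_aux {g f F : ℝ → ℝ} {t d w : ℝ}
    (hmono : StrictMono g) (hgc : Continuous g)
    (hF : ∀ τ, F (g τ) = f τ)
    (hf : HasDerivAt f d t) (hgt : HasDerivAt g w t) (hw : w ≠ 0) :
    HasDerivWithinAt F (d / w) (Set.range g) (g t) := by
  have hemb : Topology.IsEmbedding g :=
    hmono.isEmbedding_of_ordConnected ((isPreconnected_range hgc).ordConnected)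
  rw [hasDerivWithinAt_iff_tendsto_slope]
  have himg : g '' {t}ᶜ = Set.range g \ {g t} := by
    ext y
    constructor
    · rintro ⟨τ, hτ, rfl⟩
      exact ⟨⟨τ, rfl⟩, fun h => hτ (hmono.injective (by simpa using h))⟩
    · rintro ⟨⟨τ, rfl⟩, hy⟩
      exact ⟨τ, fun h => hy (by simp only [Set.mem_singleton_iff] at h ⊢; rw [h]), rfl⟩
  have hmap : 𝓝[Set.range g \ {g t}] (g t) = Filter.map g (𝓝[{t}ᶜ] t) := by
    rw [hemb.map_nhdsWithin_eq, himg]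
  rw [hmap, Filter.tendsto_map'_iff]
  have hslope : ∀ᶠ τ in 𝓝[{t}ᶜ] t,
      (slope F (g t) ∘ g) τ = slope f t τ / slope g t τ := by
    filter_upwards [self_mem_nhdsWithin] with τ hτ
    have hτt : τ ≠ t := hτ
    have hg : g τ ≠ g t := fun h => hτt (hmono.injective h)
    simp only [Function.comp, slope_def_field, hF]
    rw [div_div_div_cancel_right₀]
    exact sub_ne_zero.2 hτt
  rw [Filter.tendsto_congr' hslope]
  exact (hasDerivAt_iff_tendsto_slope.1 hf).div (hasDerivAt_iff_tendsto_slope.1 hgt) hw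

/-- For a charge in the field of a transverse plane travelling wave plus a
longitudinal field, in the light-cone parametrization `ξ = ct - z` the reduced
variables `ẑ(ξ) = z(t̂(ξ))` and `ŝ(ξ) = γ - u_z` satisfy
`dẑ/dξ = (1 + v)/(2ŝ²) - 1/2` and `dŝ/dξ = -(q/(mc²)) E^z(t̂(ξ), ẑ(ξ))`. -/
theorem stmt_4 (q m c : ℝ) (hm : 0 < m) (hc : 0 < c)
    (ε1 ε2 : ℝ → ℝ) (hε1 : Continuous ε1) (hε2 : Continuous ε2)
    (Ez : ℝ → ℝ → ℝ) (hEz : Continuous fun p : ℝ × ℝ => Ez p.1 p.2)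
    (x1 x2 x3 u1 u2 u3 γ : ℝ → ℝ)
    (hγ : ∀ t, γ t = Real.sqrt (1 + ((u1 t) ^ 2 + (u2 t) ^ 2 + (u3 t) ^ 2)))
    (hx1 : ∀ t, HasDerivAt x1 (c * u1 t / γ t) t)
    (hx2 : ∀ t, HasDerivAt x2 (c * u2 t / γ t) t)
    (hx3 : ∀ t, HasDerivAt x3 (c * u3 t / γ t) t)
    (hu1 : ∀ t, HasDerivAt u1
      (q / (m * c) * (ε1 (c * t - x3 t) - u3 t * ε1 (c * t - x3 t) / γ t)) t)
    (hu2 : ∀ t, HasDerivAt u2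
      (q / (m * c) * (ε2 (c * t - x3 t) - u3 t * ε2 (c * t - x3 t) / γ t)) t)
    (hu3 : ∀ t, HasDerivAt u3
      (q / (m * c) * (Ez t (x3 t)
        + (u1 t * ε1 (c * t - x3 t) + u2 t * ε2 (c * t - x3 t)) / γ t)) t)
    (that : ℝ → ℝ) (hthat : ∀ t, that (c * t - x3 t) = t) :
    ∀ t : ℝ,
      HasDerivWithinAt (fun ξ => x3 (that ξ))
        ((1 + ((u1 t) ^ 2 + (u2 t) ^ 2)) / (2 * (γ t - u3 t) ^ 2) - 1 / 2)
        (Set.range fun τ : ℝ => c * τ - x3 τ) (c * t - x3 t) ∧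
      HasDerivWithinAt (fun ξ => γ (that ξ) - u3 (that ξ))
        (-(q / (m * c ^ 2)) * Ez t (x3 t))
        (Set.range fun τ : ℝ => c * τ - x3 τ) (c * t - x3 t) := by
  intro t
  -- basic positivity facts
  have hP : ∀ τ, (0:ℝ) < 1 + ((u1 τ) ^ 2 + (u2 τ) ^ 2 + (u3 τ) ^ 2) := fun τ => by positivity
  have hγpos : ∀ τ, 0 < γ τ := fun τ => by rw [hγ]; exact Real.sqrt_pos.2 (hP τ)
  have hγsq : ∀ τ, (γ τ) ^ 2 = 1 + ((u1 τ) ^ 2 + (u2 τ) ^ 2 + (u3 τ) ^ 2) := fun τ => by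
    rw [hγ]; exact Real.sq_sqrt (hP τ).le
  have hs : ∀ τ, 0 < γ τ - u3 τ := by
    intro τ
    have h1 : (u3 τ) ^ 2 < (γ τ) ^ 2 := by nlinarith [hγsq τ, sq_nonneg (u1 τ), sq_nonneg (u2 τ)]
    nlinarith [abs_nonneg (u3 τ), sq_abs (u3 τ), le_abs_self (u3 τ), hγpos τ]
  -- the map ξ̃
  set g : ℝ → ℝ := fun τ => c * τ - x3 τ with hgdef
  have hgd : ∀ τ, HasDerivAt g (c - c * u3 τ / γ τ) τ := fun τ => by
    have h := ((hasDerivAt_id τ).const_mul c).sub (hx3 τ)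
    simp only [mul_one] at h
    exact h
  have hwpos : ∀ τ, 0 < c - c * u3 τ / γ τ := by
    intro τ
    have h1 : c * u3 τ / γ τ < c := by
      rw [div_lt_iff₀ (hγpos τ)]
      nlinarith [hs τ]
    linarith
  have hmono : StrictMono g := strictMono_of_hasDerivAt_pos hgd hwpos
  have hgc : Continuous g := by
    have : Differentiable ℝ g := fun τ => (hgd τ).differentiableAt
    exact this.continuous
  have hw0 : (c - c * u3 t / γ t) ≠ 0 := (hwpos t).ne'
  have hγ0 : γ t ≠ 0 := (hγpos t).ne'
  have hs0 : γ t - u3 t ≠ 0 := (hs t).ne'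
  constructor
  · have hkey := key_aux (f := x3) (F := fun ξ => x3 (that ξ)) hmono hgc
      (fun τ => by simp [hgdef, hthat]) (hx3 t) (hgd t) hw0
    have h6 : c * γ t - c * u3 t ≠ 0 := by
      have : c * γ t - c * u3 t = c * (γ t - u3 t) := by ring
      rw [this]; exact mul_ne_zero hc.ne' hs0
    convert hkey using 1
    have e2 : 1 + ((u1 t) ^ 2 + (u2 t) ^ 2) = (γ t - u3 t) * (γ t + u3 t) := by
      linear_combination -hγsq t
    rw [e2]
    field_simp
    ring
  · -- derivative of γ
    have hγd : ∀ τ, HasDerivAt γ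
        ((2 * u1 τ * (q / (m * c) * (ε1 (c * τ - x3 τ) - u3 τ * ε1 (c * τ - x3 τ) / γ τ))
          + 2 * u2 τ * (q / (m * c) * (ε2 (c * τ - x3 τ) - u3 τ * ε2 (c * τ - x3 τ) / γ τ))
          + 2 * u3 τ * (q / (m * c) * (Ez τ (x3 τ)
            + (u1 τ * ε1 (c * τ - x3 τ) + u2 τ * ε2 (c * τ - x3 τ)) / γ τ)))
          / (2 * γ τ)) τ := by
      intro τ
      have hin : HasDerivAt (fun σ => 1 + ((u1 σ) ^ 2 + (u2 σ) ^ 2 + (u3 σ) ^ 2))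
          (2 * u1 τ * (q / (m * c) * (ε1 (c * τ - x3 τ) - u3 τ * ε1 (c * τ - x3 τ) / γ τ))
          + 2 * u2 τ * (q / (m * c) * (ε2 (c * τ - x3 τ) - u3 τ * ε2 (c * τ - x3 τ) / γ τ))
          + 2 * u3 τ * (q / (m * c) * (Ez τ (x3 τ)
            + (u1 τ * ε1 (c * τ - x3 τ) + u2 τ * ε2 (c * τ - x3 τ)) / γ τ))) τ := by
        have h1 := ((hu1 τ).pow 2).add ((hu2 τ).pow 2)
        have h2 := h1.add ((hu3 τ).pow 2)
        have h3 := h2.const_add (1:ℝ)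
        refine h3.congr_deriv ?_
        ring
      have hne : (fun σ => 1 + ((u1 σ) ^ 2 + (u2 σ) ^ 2 + (u3 σ) ^ 2)) τ ≠ 0 := (hP τ).ne'
      have h4 := hin.sqrt hne
      have hfun : γ = fun σ => Real.sqrt (1 + ((u1 σ) ^ 2 + (u2 σ) ^ 2 + (u3 σ) ^ 2)) :=
        funext hγ
      rw [hfun]
      convert h4 using 2
      rw [hγ τ]
    have hfd : HasDerivAt (fun τ => γ τ - u3 τ)
        (-(q / (m * c)) * Ez t (x3 t) * (γ t - u3 t) / γ t) t := by
      have h5 := (hγd t).sub (hu3 t)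
      refine h5.congr_deriv ?_
      have hmc : m * c ≠ 0 := by positivity
      field_simp
      ring
    have hkey := key_aux (f := fun τ => γ τ - u3 τ)
      (F := fun ξ => γ (that ξ) - u3 (that ξ)) hmono hgc
      (fun τ => by simp [hgdef, hthat]) hfd (hgd t) hw0
    have h6 : c * γ t - c * u3 t ≠ 0 := by
      have : c * γ t - c * u3 t = c * (γ t - u3 t) := by ring
      rw [this]; exact mul_ne_zero hc.ne' hs0
    convert hkey using 1
    have hmc : m ≠ 0 := hm.ne'
    have hcc : c ≠ 0 := hc.ne'
    field_simp
end

section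
/- Let v : ℝ → [0, ∞) be C¹, K > 0, Ñ : ℝ → ℝ be C¹, Z ∈ ℝ, and define H(Δ, s; ξ) := (s² + 1 + v(ξ))/(2s) + K(∫_Z^{Z+Δ} Ñ(ζ) dζ − Ñ(Z) Δ) for s > 0. If ξ ↦ (Δ̂(ξ), ŝ(ξ)) is a C¹ solution of Δ̂' = (1 + v)/(2ŝ²) − 1/2, ŝ' = K[Ñ(Z + Δ̂) − Ñ(Z)] with ŝ > 0, then (d/dξ) H(Δ̂(ξ), ŝ(ξ); ξ) = v'(ξ)/(2 ŝ(ξ)). In particular, if v(0) = 0, Δ̂(0) = 0, ŝ(0) = 1, then H(Δ̂(ξ), ŝ(ξ); ξ) = 1 + ∫₀^ξ v'(η)/(2 ŝ(η)) dη for all ξ ≥ 0; and if v is constant on [l, ∞), then H(Δ̂(ξ), ŝ(ξ); ξ) is constant on [l, ∞). -/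
/-- Along a solution of `Δ̂' = (1+v)/(2ŝ²) - 1/2`, `ŝ' = K[Ñ(Z+Δ̂) - Ñ(Z)]` with
`ŝ > 0`, the energy `H(Δ̂(ξ), ŝ(ξ); ξ)` has derivative `v'(ξ)/(2ŝ(ξ))`; with the
initial data `v(0)=0, Δ̂(0)=0, ŝ(0)=1` it equals `1 + ∫₀^ξ v'/(2ŝ)`, and it is
constant on `[l,∞)` if `v` is constant there. -/
theorem stmt_6 (v : ℝ → ℝ) (hv : ContDiff ℝ 1 v)
    (K : ℝ) (hK : 0 < K) (N : ℝ → ℝ) (hN : ContDiff ℝ 1 N) (Z : ℝ)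
    (H : ℝ → ℝ → ℝ → ℝ)
    (hH : ∀ Δ s ξ, 0 < s → H Δ s ξ
      = (s ^ 2 + 1 + v ξ) / (2 * s) + K * ((∫ ζ in Z..(Z + Δ), N ζ) - N Z * Δ))
    (D s : ℝ → ℝ) (hD : ContDiff ℝ 1 D) (hs : ContDiff ℝ 1 s) (hspos : ∀ ξ, 0 < s ξ)
    (hDeq : ∀ ξ, HasDerivAt D ((1 + v ξ) / (2 * (s ξ) ^ 2) - 1 / 2) ξ)
    (hseq : ∀ ξ, HasDerivAt s (K * (N (Z + D ξ) - N Z)) ξ) :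
    (∀ ξ, HasDerivAt (fun η => H (D η) (s η) η) (deriv v ξ / (2 * s ξ)) ξ) ∧
    (v 0 = 0 → D 0 = 0 → s 0 = 1 →
      ∀ ξ : ℝ, 0 ≤ ξ →
        H (D ξ) (s ξ) ξ = 1 + ∫ η in (0:ℝ)..ξ, deriv v η / (2 * s η)) ∧
    (∀ l : ℝ, (∀ ξ : ℝ, l ≤ ξ → v ξ = v l) →
      ∀ ξ : ℝ, l ≤ ξ → H (D ξ) (s ξ) ξ = H (D l) (s l) l) := by
  have hcN : Continuous N := hN.continuous
  set F : ℝ → ℝ := fun η =>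
    (s η ^ 2 + 1 + v η) / (2 * s η) + K * ((∫ ζ in Z..(Z + D η), N ζ) - N Z * D η) with hF_def
  have hFeq : (fun η => H (D η) (s η) η) = F := funext fun η => hH _ _ _ (hspos η)
  have hderiv : ∀ ξ, HasDerivAt F (deriv v ξ / (2 * s ξ)) ξ := by
    intro ξ
    have hsp := hspos ξ
    have hsne : s ξ ≠ 0 := hsp.ne'
    have hv' : HasDerivAt v (deriv v ξ) ξ := (hv.differentiable one_ne_zero ξ).hasDerivAt
    have hnum : HasDerivAt (fun η => s η ^ 2 + 1 + v η)
        (↑2 * s ξ ^ 1 * (K * (N (Z + D ξ) - N Z)) + deriv v ξ) ξ :=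
      (((hseq ξ).pow 2).add_const 1).add hv'
    have hden : HasDerivAt (fun η => 2 * s η) (2 * (K * (N (Z + D ξ) - N Z))) ξ :=
      (hseq ξ).const_mul 2
    have hquot := hnum.div hden (by positivity)
    have hG : HasDerivAt (fun x => ∫ ζ in Z..x, N ζ) (N (Z + D ξ)) (Z + D ξ) :=
      intervalIntegral.integral_hasDerivAt_right (hcN.intervalIntegrable _ _)
        (hcN.stronglyMeasurableAtFilter _ _) hcN.continuousAt
    have hinner : HasDerivAt (fun η => Z + D η) ((1 + v ξ) / (2 * (s ξ) ^ 2) - 1 / 2) ξ :=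
      (hDeq ξ).const_add Z
    have hint := hG.comp ξ hinner
    have h2 := (hint.sub ((hDeq ξ).const_mul (N Z))).const_mul K
    have htot := hquot.add h2
    refine htot.congr_deriv ?_
    field_simp
    ring
  have hderivH : ∀ ξ, HasDerivAt (fun η => H (D η) (s η) η) (deriv v ξ / (2 * s ξ)) ξ := by
    rw [hFeq]; exact hderiv
  have hcf : Continuous (fun η => deriv v η / (2 * s η)) := by
    apply (hv.continuous_deriv le_rfl).div (continuous_const.mul hs.continuous)
    intro η; have := hspos η; exact mul_ne_zero two_ne_zero this.ne'
  refine ⟨hderivH, ?_, ?_⟩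
  · intro hv0 hD0 hs0 ξ hξ
    have hftc : ∫ η in (0:ℝ)..ξ, deriv v η / (2 * s η) = F ξ - F 0 :=
      intervalIntegral.integral_eq_sub_of_hasDerivAt (fun x _ => hderiv x)
        (hcf.intervalIntegrable 0 ξ)
    have hF0 : F 0 = 1 := by
      simp only [hF_def, hv0, hD0, hs0, add_zero, intervalIntegral.integral_same]
      norm_num
    rw [hH _ _ _ (hspos ξ)]
    have : ((s ξ) ^ 2 + 1 + v ξ) / (2 * s ξ) + K * ((∫ ζ in Z..(Z + D ξ), N ζ) - N Z * D ξ) = F ξ := rfl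
    rw [this, hftc, hF0]; ring
  · intro l hlconst ξ hξ
    have hzero : Set.EqOn (deriv v) 0 (Set.Ici l) := by
      have hIoi : Set.EqOn (deriv v) 0 (Set.Ioi l) := by
        intro η hη
        have hev : v =ᶠ[nhds η] (fun _ => v l) := by
          filter_upwards [Ioi_mem_nhds hη] with x hx
          exact hlconst x (le_of_lt hx)
        have : HasDerivAt v 0 η := (hasDerivAt_const η (v l)).congr_of_eventuallyEq hev
        simpa using this.deriv
      have := hIoi.closure (hv.continuous_deriv le_rfl) continuous_const
      simpa [closure_Ioi] using this
    have hftc : ∫ η in l..ξ, deriv v η / (2 * s η) = F ξ - F l :=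
      intervalIntegral.integral_eq_sub_of_hasDerivAt (fun x _ => hderiv x)
        (hcf.intervalIntegrable l ξ)
    have hzint : ∫ η in l..ξ, deriv v η / (2 * s η) = 0 := by
      rw [intervalIntegral.integral_congr (g := fun _ => (0:ℝ))]
      · simp
      · intro x hx
        rw [Set.uIcc_of_le hξ] at hx
        have : deriv v x = 0 := hzero (Set.Icc_subset_Ici_self hx)
        simp [this]
    have : F ξ = F l := by linarith [hftc ▸ hzint]
    rw [hH _ _ _ (hspos ξ), hH _ _ _ (hspos l)]
    exact this
end

section
/- Let I ⊂ ℝ be an open interval, l ∈ ℝ, ẑ_e : (l, ∞) × I → ℝ be C¹, and ξ_H : I → (0, ∞) be C¹. Suppose ẑ_e(ξ + ξ_H(Z), Z) = ẑ_e(ξ, Z) for all ξ > l and Z ∈ I. Then, with Ĵ := ∂ẑ_e/∂Z and ẑ_e' := ∂ẑ_e/∂ξ, for every k ∈ ℕ, ξ > l and Z ∈ I: Ĵ(ξ + k ξ_H(Z), Z) = Ĵ(ξ, Z) − k (dξ_H/dZ)(Z) ẑ_e'(ξ, Z). -/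
/-- If `ẑ_e(ξ+ξ_H(Z), Z) = ẑ_e(ξ, Z)` (periodicity with `Z`-dependent period),
then for every `k ∈ ℕ`:
`Ĵ(ξ + k ξ_H(Z), Z) = Ĵ(ξ,Z) - k (dξ_H/dZ)(Z) ẑ_e'(ξ,Z)`. -/
theorem stmt_11 (I : Set ℝ) (hIopen : IsOpen I) (hIconn : I.OrdConnected) (l : ℝ)
    (ze : ℝ → ℝ → ℝ) (ξH : ℝ → ℝ)
    (hze : ContDiffOn ℝ 1 (fun p : ℝ × ℝ => ze p.1 p.2) (Set.Ioi l ×ˢ I))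
    (hξH : ContDiffOn ℝ 1 ξH I)
    (hξHpos : ∀ Z ∈ I, 0 < ξH Z)
    (hper : ∀ ξ ∈ Set.Ioi l, ∀ Z ∈ I, ze (ξ + ξH Z) Z = ze ξ Z) :
    ∀ k : ℕ, ∀ ξ ∈ Set.Ioi l, ∀ Z ∈ I,
      deriv (fun Z' => ze (ξ + k * ξH Z) Z') Z
        = deriv (fun Z' => ze ξ Z') Z - k * deriv ξH Z * deriv (fun η => ze η Z) ξ := by
  -- iterated periodicity
  have hperk : ∀ k : ℕ, ∀ ξ ∈ Set.Ioi l, ∀ Z ∈ I, ze (ξ + k * ξH Z) Z = ze ξ Z := by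
    intro k
    induction k with
    | zero => intro ξ hξ Z hZ; simp
    | succ k ih =>
      intro ξ hξ Z hZ
      have hξ' : ξ + ξH Z ∈ Set.Ioi l := by
        have := hξHpos Z hZ
        simp only [Set.mem_Ioi] at hξ ⊢; linarith
      have h1 := ih (ξ + ξH Z) hξ' Z hZ
      have h2 := hper ξ hξ Z hZ
      have harg : ξ + (k + 1 : ℕ) * ξH Z = (ξ + ξH Z) + k * ξH Z := by
        push_cast; ring
      rw [harg, h1, h2]
  intro k ξ hξ Z hZ
  set S := Set.Ioi l ×ˢ I with hS
  have hSopen : IsOpen S := (isOpen_Ioi).prod hIopen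
  set c : ℝ := (k : ℝ) * ξH Z with hc
  have hcpos : 0 ≤ c := by
    have := (hξHpos Z hZ).le
    positivity
  have hξc : ξ + c ∈ Set.Ioi l := by
    simp only [Set.mem_Ioi] at hξ ⊢; linarith
  have hp0 : (ξ + c, Z) ∈ S := Set.mk_mem_prod hξc hZ
  have hF : DifferentiableAt ℝ (fun p : ℝ × ℝ => ze p.1 p.2) (ξ + c, Z) :=
    ((hze.differentiableOn one_ne_zero) (ξ + c, Z) hp0).differentiableAt
      (hSopen.mem_nhds hp0)
  set Df := fderiv ℝ (fun p : ℝ × ℝ => ze p.1 p.2) (ξ + c, Z) with hDfdef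
  have hDf : HasFDerivAt (fun p : ℝ × ℝ => ze p.1 p.2) Df (ξ + c, Z) := hF.hasFDerivAt
  -- partial derivative in Z at the shifted point (this is the LHS)
  have hpZ : HasDerivAt (fun Z' => ze (ξ + c) Z') (Df (0, 1)) Z := by
    have hl : HasDerivAt (fun Z' : ℝ => ((ξ + c : ℝ), Z')) ((0 : ℝ), (1 : ℝ)) Z :=
      (hasDerivAt_const Z (ξ + c)).prodMk (hasDerivAt_id Z)
    exact hDf.comp_hasDerivAt Z hl
  -- partial derivative in ξ at the shifted point
  have hpξ : HasDerivAt (fun η => ze η Z) (Df (1, 0)) (ξ + c) := by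
    have hl : HasDerivAt (fun η : ℝ => (η, Z)) ((1 : ℝ), (0 : ℝ)) (ξ + c) :=
      (hasDerivAt_id (ξ + c)).prodMk (hasDerivAt_const (ξ + c) Z)
    exact hDf.comp_hasDerivAt (ξ + c) hl
  -- deriv of ξH at Z
  have hξHd : DifferentiableAt ℝ ξH Z :=
    ((hξH.differentiableOn one_ne_zero) Z hZ).differentiableAt (hIopen.mem_nhds hZ)
  -- the composite g(Z') = ze (ξ + k ξH Z') Z'
  have hg : HasDerivAt (fun Z' => ze (ξ + (k : ℝ) * ξH Z') Z')
      (Df ((k : ℝ) * deriv ξH Z, 1)) Z := by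
    have hinner : HasDerivAt (fun Z' : ℝ => ξ + (k : ℝ) * ξH Z')
        ((k : ℝ) * deriv ξH Z) Z := by
      exact ((hξHd.hasDerivAt).const_mul (k : ℝ)).const_add ξ
    have hl : HasDerivAt (fun Z' : ℝ => ((ξ + (k : ℝ) * ξH Z' : ℝ), Z'))
        (((k : ℝ) * deriv ξH Z, (1 : ℝ))) Z := hinner.prodMk (hasDerivAt_id Z)
    have hDf' := hDf
    rw [hc] at hDf'
    exact HasFDerivAt.comp_hasDerivAt (f := fun Z' : ℝ => ((ξ + (k : ℝ) * ξH Z' : ℝ), Z')) Z hDf' hl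
  -- g agrees with Z' ↦ ze ξ Z' on a neighborhood of Z
  have heq : (fun Z' => ze (ξ + (k : ℝ) * ξH Z') Z') =ᶠ[nhds Z] fun Z' => ze ξ Z' := by
    filter_upwards [hIopen.mem_nhds hZ] with Z' hZ'
    exact hperk k ξ hξ Z' hZ'
  have hg' : HasDerivAt (fun Z' => ze ξ Z') (Df ((k : ℝ) * deriv ξH Z, 1)) Z :=
    hg.congr_of_eventuallyEq heq.symm
  -- deriv in ξ is periodic: deriv at ξ + c equals deriv at ξ
  have hηeq : (fun η => ze (η + c) Z) =ᶠ[nhds ξ] fun η => ze η Z := by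
    filter_upwards [isOpen_Ioi.mem_nhds hξ] with η hη
    have := hperk k η hη Z hZ
    simpa [← hc] using this
  have hshift : HasDerivAt (fun η => ze (η + c) Z) (Df (1, 0)) ξ := by
    have h2 : HasDerivAt (fun η : ℝ => η + c) 1 ξ := by
      simpa using (hasDerivAt_id ξ).add_const c
    have := HasDerivAt.comp ξ hpξ h2
    exact (mul_one (Df (1, 0))) ▸ this
  have hpξ' : HasDerivAt (fun η => ze η Z) (Df (1, 0)) ξ :=
    hshift.congr_of_eventuallyEq hηeq.symm
  -- linearity: Df (k*ξH' Z, 1) = k*ξH' Z * Df (1,0) + Df (0,1)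
  have hlin : Df ((k : ℝ) * deriv ξH Z, 1)
      = (k : ℝ) * deriv ξH Z * Df (1, 0) + Df (0, 1) := by
    have : ((k : ℝ) * deriv ξH Z, (1 : ℝ))
        = ((k : ℝ) * deriv ξH Z) • ((1 : ℝ), (0 : ℝ)) + ((0 : ℝ), (1 : ℝ)) := by
      simp [Prod.ext_iff]
    rw [this, map_add, map_smul]
    simp [mul_comm]
  rw [show ξ + (k : ℝ) * ξH Z = ξ + c from rfl]
  rw [hpZ.deriv, hg'.deriv, hpξ'.deriv, hlin]
  ring
end

section
/- Let I ⊂ ℝ be an open interval, l ∈ ℝ, ẑ_e : (l, ∞) × I → ℝ be C¹, and ξ_H : I → (0, ∞) be C¹, with ẑ_e(ξ + ξ_H(Z), Z) = ẑ_e(ξ, Z) for all ξ > l, Z ∈ I. Set Δ̂(ξ, Z) := ẑ_e(ξ, Z) − Z, Δ̂' := ∂Δ̂/∂ξ, Ĵ := ∂ẑ_e/∂Z, and define b(ξ, Z) := −Δ̂'(ξ, Z) (d/dZ)(log ξ_H)(Z) and a(ξ, Z) := Ĵ(ξ, Z) − ξ b(ξ, Z). Then Ĵ(ξ, Z) = a(ξ,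 Z) + ξ b(ξ, Z), both a and b are ξ_H(Z)-periodic in ξ, and b has zero mean over a period: ∫_ξ^{ξ+ξ_H(Z)} b(η, Z) dη = 0 for all ξ > l, Z ∈ I. -/
/-- With `b := -Δ̂' (d/dZ)(log ξ_H)` and `a := Ĵ - ξ b`, one has `Ĵ = a + ξ b`,
`a` and `b` are `ξ_H(Z)`-periodic in `ξ`, and `b` has zero mean over a period. -/
theorem stmt_12 (I : Set ℝ) (hIopen : IsOpen I) (hIconn : I.OrdConnected) (l : ℝ)
    (ze : ℝ → ℝ → ℝ) (ξH : ℝ → ℝ)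
    (hze : ContDiffOn ℝ 1 (fun p : ℝ × ℝ => ze p.1 p.2) (Set.Ioi l ×ˢ I))
    (hξH : ContDiffOn ℝ 1 ξH I)
    (hξHpos : ∀ Z ∈ I, 0 < ξH Z)
    (hper : ∀ ξ ∈ Set.Ioi l, ∀ Z ∈ I, ze (ξ + ξH Z) Z = ze ξ Z)
    (a b : ℝ → ℝ → ℝ)
    (hb : ∀ ξ Z : ℝ, b ξ Z
      = -(deriv (fun η => ze η Z - Z) ξ) * deriv (fun Z' => Real.log (ξH Z')) Z)
    (ha : ∀ ξ Z : ℝ, a ξ Z = deriv (fun Z' => ze ξ Z') Z - ξ * b ξ Z) :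
    (∀ ξ ∈ Set.Ioi l, ∀ Z ∈ I,
      deriv (fun Z' => ze ξ Z') Z = a ξ Z + ξ * b ξ Z) ∧
    (∀ ξ ∈ Set.Ioi l, ∀ Z ∈ I, a (ξ + ξH Z) Z = a ξ Z ∧ b (ξ + ξH Z) Z = b ξ Z) ∧
    (∀ ξ ∈ Set.Ioi l, ∀ Z ∈ I, (∫ η in ξ..(ξ + ξH Z), b η Z) = 0) := by
  set f : ℝ × ℝ → ℝ := fun p => ze p.1 p.2 with hf
  set U : Set (ℝ × ℝ) := Set.Ioi l ×ˢ I with hUdef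
  have hU : IsOpen U := isOpen_Ioi.prod hIopen
  have hfd : ∀ p : ℝ × ℝ, p ∈ U → HasFDerivAt f (fderiv ℝ f p) p := fun p hp =>
    (((hze.differentiableOn one_ne_zero).differentiableAt (hU.mem_nhds hp))).hasFDerivAt
  -- partial derivative in ξ
  have hDξ : ∀ ξ Z, (ξ, Z) ∈ U →
      HasDerivAt (fun η => ze η Z) (fderiv ℝ f (ξ, Z) (1, 0)) ξ := by
    intro ξ Z hp
    have h1 : HasDerivAt (fun η : ℝ => (η, Z)) ((1 : ℝ), (0 : ℝ)) ξ :=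
      HasDerivAt.prodMk (hasDerivAt_id ξ) (hasDerivAt_const ξ Z)
    exact (hfd _ hp).comp_hasDerivAt ξ h1
  -- partial derivative in Z
  have hDZ : ∀ ξ Z, (ξ, Z) ∈ U →
      HasDerivAt (fun Z' => ze ξ Z') (fderiv ℝ f (ξ, Z) (0, 1)) Z := by
    intro ξ Z hp
    have h1 : HasDerivAt (fun Z' : ℝ => (ξ, Z')) ((0 : ℝ), (1 : ℝ)) Z :=
      HasDerivAt.prodMk (hasDerivAt_const Z ξ) (hasDerivAt_id Z)
    exact (hfd _ hp).comp_hasDerivAt Z h1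
  have hmem : ∀ ξ ∈ Set.Ioi l, ∀ Z ∈ I, (ξ, Z) ∈ U := fun ξ hξ Z hZ => ⟨hξ, hZ⟩
  have hmem' : ∀ ξ ∈ Set.Ioi l, ∀ Z ∈ I, (ξ + ξH Z, Z) ∈ U := by
    intro ξ hξ Z hZ
    exact ⟨lt_trans hξ (lt_add_of_pos_right ξ (hξHpos Z hZ)), hZ⟩
  -- F1: periodicity of the ξ-partial derivative
  have hF1 : ∀ ξ ∈ Set.Ioi l, ∀ Z ∈ I,
      deriv (fun η => ze η Z) (ξ + ξH Z) = deriv (fun η => ze η Z) ξ := by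
    intro ξ hξ Z hZ
    have heq : (fun η : ℝ => ze (η + ξH Z) Z) =ᶠ[nhds ξ] (fun η : ℝ => ze η Z) := by
      filter_upwards [isOpen_Ioi.mem_nhds hξ] with η hη
      exact hper η hη Z hZ
    calc deriv (fun η => ze η Z) (ξ + ξH Z)
        = deriv (fun η : ℝ => ze (η + ξH Z) Z) ξ :=
          (deriv_comp_add_const (fun η => ze η Z) (ξH Z) ξ).symm
      _ = deriv (fun η => ze η Z) ξ := heq.deriv_eq
  -- derivative of ξH
  have hξH' : ∀ Z ∈ I, HasDerivAt ξH (deriv ξH Z) Z := fun Z hZ =>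
    ((hξH.differentiableOn one_ne_zero).differentiableAt (hIopen.mem_nhds hZ)).hasDerivAt
  -- derivative of log ∘ ξH
  have hlog : ∀ Z ∈ I, deriv (fun Z' => Real.log (ξH Z')) Z = deriv ξH Z / ξH Z := by
    intro Z hZ
    exact ((hξH' Z hZ).log (hξHpos Z hZ).ne').deriv
  -- F2: chain rule relation
  have hF2 : ∀ ξ ∈ Set.Ioi l, ∀ Z ∈ I,
      fderiv ℝ f (ξ + ξH Z, Z) (0, 1)
        + deriv ξH Z * fderiv ℝ f (ξ + ξH Z, Z) (1, 0)
      = fderiv ℝ f (ξ, Z) (0, 1) := by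
    intro ξ hξ Z hZ
    have hin : HasDerivAt (fun Z' : ℝ => (ξ + ξH Z', Z')) ((deriv ξH Z, (1 : ℝ))) Z := by
      simpa using HasDerivAt.prodMk ((hasDerivAt_const Z ξ).add (hξH' Z hZ)) (hasDerivAt_id Z)
    have hL0 := HasFDerivAt.comp_hasDerivAt (f := fun Z' : ℝ => (ξ + ξH Z', Z')) Z
      (hfd _ (hmem' ξ hξ Z hZ)) hin
    have hL : HasDerivAt (fun Z' => ze (ξ + ξH Z') Z')
        (fderiv ℝ f (ξ + ξH Z, Z) (deriv ξH Z, 1)) Z := hL0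
    have hR : HasDerivAt (fun Z' => ze ξ Z') (fderiv ℝ f (ξ, Z) (0, 1)) Z :=
      hDZ ξ Z (hmem ξ hξ Z hZ)
    have heq : (fun Z' => ze (ξ + ξH Z') Z') =ᶠ[nhds Z] (fun Z' => ze ξ Z') := by
      filter_upwards [hIopen.mem_nhds hZ] with Z' hZ'
      exact hper ξ hξ Z' hZ'
    have hd : deriv (fun Z' => ze (ξ + ξH Z') Z') Z = deriv (fun Z' => ze ξ Z') Z :=
      heq.deriv_eq
    rw [hL.deriv, hR.deriv] at hd
    have hdecomp : ((deriv ξH Z, (1 : ℝ)) : ℝ × ℝ)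
        = (0, 1) + deriv ξH Z • ((1 : ℝ), (0 : ℝ)) := by
      simp [Prod.ext_iff]
    rw [hdecomp, map_add, map_smul] at hd
    simpa [smul_eq_mul] using hd
  -- relate deriv (ze · Z - Z) to the partial derivative
  have hDsub : ∀ ξ ∈ Set.Ioi l, ∀ Z ∈ I,
      deriv (fun η => ze η Z - Z) ξ = fderiv ℝ f (ξ, Z) (1, 0) := by
    intro ξ hξ Z hZ
    rw [deriv_sub_const]
    exact (hDξ ξ Z (hmem ξ hξ Z hZ)).deriv
  refine ⟨?_, ?_, ?_⟩
  · intro ξ hξ Z hZ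
    rw [ha]; ring
  · intro ξ hξ Z hZ
    have hξ' : ξ + ξH Z ∈ Set.Ioi l := (hmem' ξ hξ Z hZ).1
    have hbper : b (ξ + ξH Z) Z = b ξ Z := by
      rw [hb, hb, hDsub _ hξ' Z hZ, hDsub ξ hξ Z hZ]
      have : fderiv ℝ f (ξ + ξH Z, Z) (1, 0) = fderiv ℝ f (ξ, Z) (1, 0) := by
        rw [← (hDξ _ Z (hmem' ξ hξ Z hZ)).deriv, ← (hDξ ξ Z (hmem ξ hξ Z hZ)).deriv]
        exact hF1 ξ hξ Z hZ
      rw [this]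
    refine ⟨?_, hbper⟩
    rw [ha, ha, hbper]
    have hJper : deriv (fun Z' => ze (ξ + ξH Z) Z') Z
        = fderiv ℝ f (ξ, Z) (0, 1) - deriv ξH Z * fderiv ℝ f (ξ, Z) (1, 0) := by
      rw [(hDZ _ Z (hmem' ξ hξ Z hZ)).deriv]
      have h2 := hF2 ξ hξ Z hZ
      have h3 : fderiv ℝ f (ξ + ξH Z, Z) (1, 0) = fderiv ℝ f (ξ, Z) (1, 0) := by
        rw [← (hDξ _ Z (hmem' ξ hξ Z hZ)).deriv, ← (hDξ ξ Z (hmem ξ hξ Z hZ)).deriv]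
        exact hF1 ξ hξ Z hZ
      rw [h3] at h2
      linarith
    rw [hJper, (hDZ ξ Z (hmem ξ hξ Z hZ)).deriv, hb, hDsub ξ hξ Z hZ, hlog Z hZ]
    have hne : ξH Z ≠ 0 := (hξHpos Z hZ).ne'
    field_simp
    ring
  · intro ξ hξ Z hZ
    have hT : 0 < ξH Z := hξHpos Z hZ
    have hsub : Set.uIcc ξ (ξ + ξH Z) ⊆ Set.Ioi l := by
      rw [Set.uIcc_of_le (le_add_of_nonneg_right hT.le)]
      intro x hx
      exact lt_of_lt_of_le hξ hx.1
    -- continuity of the ξ-partial derivative along the segment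
    have hcontf : ContinuousOn (fderiv ℝ f) U :=
      hze.continuousOn_fderiv_of_isOpen hU le_rfl
    have hcont : ContinuousOn (fun η => fderiv ℝ f (η, Z) (1, 0))
        (Set.uIcc ξ (ξ + ξH Z)) := by
      have h1 : ContinuousOn (fun η => fderiv ℝ f (η, Z)) (Set.uIcc ξ (ξ + ξH Z)) := by
        apply hcontf.comp (Continuous.continuousOn (by fun_prop))
        intro x hx
        exact hmem x (hsub hx) Z hZ
      exact (ContinuousLinearMap.apply ℝ ℝ ((1 : ℝ), (0 : ℝ))).continuous.comp_continuousOn h1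
    have hint : IntervalIntegrable (fun η => fderiv ℝ f (η, Z) (1, 0))
        MeasureTheory.volume ξ (ξ + ξH Z) := hcont.intervalIntegrable
    have hFTC : (∫ η in ξ..(ξ + ξH Z), fderiv ℝ f (η, Z) (1, 0)) = 0 := by
      rw [intervalIntegral.integral_eq_sub_of_hasDerivAt
        (fun x hx => hDξ x Z (hmem x (hsub hx) Z hZ)) hint]
      rw [hper ξ hξ Z hZ]; ring
    have hcongr : (∫ η in ξ..(ξ + ξH Z), b η Z)
        = ∫ η in ξ..(ξ + ξH Z),
            (-(deriv (fun Z' => Real.log (ξH Z')) Z)) * fderiv ℝ f (η, Z) (1, 0) := by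
      apply intervalIntegral.integral_congr
      intro η hη
      simp only [hb, hDsub η (hsub hη) Z hZ]; ring
    rw [hcongr, intervalIntegral.integral_const_mul, hFTC, mul_zero]
end

section
/- Let M > 0 and consider the autonomous planar system Δ' = 1/(2s²) − 1/2, s' = M Δ on the half-plane {s > 0}, with conserved energy H(Δ, s) = (s² + 1)/(2s) + M Δ²/2. Let (Δ(ξ), s(ξ)) be a maximal solution with energy h := H(Δ(ξ₁), s(ξ₁)) > 1 at some ξ₁. Then the solution is defined for all ξ ∈ ℝ and is periodic, with period ξ_H = 2 ∫_{−Δ_M}^{Δ_M} γ̆(Δ)/√(γ̆(Δ)² − 1) dΔ, where γ̆(Δ) := h − M Δ²/2 and Δ_M := √(2(h − 1)/M). -/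
open Set Function Real

namespace S13

noncomputable def sLo (h : ℝ) : ℝ := h - Real.sqrt (h^2-1)
noncomputable def sHi (h : ℝ) : ℝ := h + Real.sqrt (h^2-1)
noncomputable def dM (M h : ℝ) : ℝ := Real.sqrt (2*(h-1)/M)
noncomputable def gb (M h x : ℝ) : ℝ := h - M*x^2/2
noncomputable def En (M : ℝ) (p : ℝ × ℝ) : ℝ := (p.2^2+1)/(2*p.2) + M*p.1^2/2

variable {M h : ℝ}

lemma sqrt_sq_h (hh : 1 < h) : (Real.sqrt (h^2-1))^2 = h^2-1 :=
  Real.sq_sqrt (by nlinarith)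

lemma sLo_pos (hh : 1 < h) : 0 < sLo h := by
  have : Real.sqrt (h^2-1) < h := (Real.sqrt_lt' (by linarith)).2 (by nlinarith)
  simp [sLo]; linarith

lemma sLo_lt_one (hh : 1 < h) : sLo h < 1 := by
  have : h - 1 < Real.sqrt (h^2-1) := by
    have := Real.lt_sqrt (x := h-1) (y := h^2-1) (by linarith)
    rw [this]; nlinarith
  simp [sLo]; linarith

lemma one_lt_sHi (hh : 1 < h) : 1 < sHi h := by
  have : 0 ≤ Real.sqrt (h^2-1) := Real.sqrt_nonneg _
  simp [sHi]; linarith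

lemma sLo_mul_sHi (hh : 1 < h) : sLo h * sHi h = 1 := by
  have := sqrt_sq_h hh
  simp only [sLo, sHi]; nlinarith

lemma sLo_add_sHi : sLo h + sHi h = 2*h := by simp [sLo, sHi]; ring

lemma sHi_pos (hh : 1 < h) : 0 < sHi h := lt_trans one_pos (one_lt_sHi hh)

lemma dM_pos (hM : 0 < M) (hh : 1 < h) : 0 < dM M h :=
  Real.sqrt_pos.2 (by apply div_pos <;> linarith)

lemma dM_sq (hM : 0 < M) (hh : 1 < h) : (dM M h)^2 = 2*(h-1)/M :=
  Real.sq_sqrt (le_of_lt (by apply div_pos <;> linarith))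

lemma dM_sq' (hM : 0 < M) (hh : 1 < h) : M * (dM M h)^2 / 2 = h - 1 := by
  rw [dM_sq hM hh]; field_simp

/-- γ(s) ≤ h iff s between roots, for s > 0. -/
lemma gamma_le_iff (hh : 1 < h) {s : ℝ} (hs : 0 < s) :
    (s^2+1)/(2*s) ≤ h ↔ sLo h ≤ s ∧ s ≤ sHi h := by
  rw [div_le_iff₀ (by linarith)]
  constructor
  · intro H
    have h1 : (s - sLo h) * (s - sHi h) ≤ 0 := by
      have e1 := sLo_mul_sHi hh
      have e2 := sLo_add_sHi (h := h)
      nlinarith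
    constructor
    · by_contra hc
      push_neg at hc
      have h2 : s - sHi h < 0 := by
        have := sLo_lt_one hh; have := one_lt_sHi hh
        nlinarith [sLo_mul_sHi hh, sLo_pos hh]
      nlinarith
    · by_contra hc
      push_neg at hc
      have := sLo_pos hh; have := sLo_lt_one hh; have := one_lt_sHi hh
      nlinarith
  · rintro ⟨h1, h2⟩
    have e1 := sLo_mul_sHi hh
    have e2 := sLo_add_sHi (h := h)
    nlinarith

lemma one_le_gamma {s : ℝ} (hs : 0 < s) : 1 ≤ (s^2+1)/(2*s) := by
  rw [le_div_iff₀ (by linarith)]; nlinarith [sq_nonneg (s-1)]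

/-- If γ(s) = h then s = sLo or s = sHi. -/
lemma gamma_eq (hh : 1 < h) {s : ℝ} (hs : 0 < s) (he : (s^2+1)/(2*s) = h) :
    s = sLo h ∨ s = sHi h := by
  have h1 : s^2 + 1 = 2*h*s := by field_simp at he; linarith
  have h2 : (s - sLo h) * (s - sHi h) = 0 := by
    have e1 := sLo_mul_sHi hh
    have e2 := sLo_add_sHi (h := h)
    nlinarith
  rcases mul_eq_zero.1 h2 with h3 | h3
  · left; linarith
  · right; linarith

/-- Bounds on the level set. -/
lemma level_bounds (hM : 0 < M) (hh : 1 < h) {p : ℝ × ℝ} (hs : 0 < p.2)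
    (hE : En M p = h) : sLo h ≤ p.2 ∧ p.2 ≤ sHi h ∧ |p.1| ≤ dM M h := by
  have hg1 : 1 ≤ (p.2^2+1)/(2*p.2) := one_le_gamma hs
  have hq : 0 ≤ M*p.1^2/2 := by positivity
  have hgle : (p.2^2+1)/(2*p.2) ≤ h := by simp only [En] at hE; linarith
  obtain ⟨hl, hr⟩ := (gamma_le_iff hh hs).1 hgle
  refine ⟨hl, hr, ?_⟩
  have : M*p.1^2/2 ≤ h - 1 := by simp only [En] at hE; linarith
  have h2 : p.1^2 ≤ (dM M h)^2 := by
    have hd := dM_sq' hM hh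
    nlinarith
  calc |p.1| = Real.sqrt (p.1^2) := (Real.sqrt_sq_eq_abs _).symm
    _ ≤ Real.sqrt ((dM M h)^2) := Real.sqrt_le_sqrt h2
    _ = dM M h := Real.sqrt_sq (dM_pos hM hh).le

end S13

namespace S13

/-- clamp to [-d,d] -/
noncomputable def cl (d x : ℝ) : ℝ := max (-d) (min d x)

lemma cl_lip (d a b : ℝ) : |cl d a - cl d b| ≤ |a - b| := by
  have h1 : |min d a - min d b| ≤ |a - b| := by
    rw [min_comm d a, min_comm d b]
    exact abs_min_sub_min_le_max _ _ _ _ |>.trans (by simp)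
  calc |cl d a - cl d b| ≤ |min d a - min d b| := by
        rw [cl, cl, max_comm, max_comm (-d)]
        exact abs_max_sub_max_le_abs _ _ _
    _ ≤ |a - b| := h1

lemma cl_eq_self {d x : ℝ} (hx : |x| ≤ d) : cl d x = x := by
  rw [abs_le] at hx
  rw [cl, min_eq_right hx.2, max_eq_right hx.1]

lemma cl_abs_le {d x : ℝ} (hd : 0 ≤ d) : |cl d x| ≤ d := by
  rw [abs_le, cl]
  constructor
  · exact le_max_left _ _
  · exact max_le (by linarith) (min_le_left _ _)

lemma cl_neg {d : ℝ} (hd : 0 ≤ d) (x : ℝ) : cl d (-x) = - cl d x := by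
  simp only [cl, max_def, min_def]
  split_ifs <;> linarith

/-- The modified (globally Lipschitz, bounded) vector field. -/
noncomputable def vf (M c d : ℝ) (p : ℝ × ℝ) : ℝ × ℝ :=
  (1/(2*(max p.2 c)^2) - 1/2, M * cl d p.1)

lemma inv_sq_lip {c a b : ℝ} (hc : 0 < c) (ha : c ≤ a) (hb : c ≤ b) :
    |1/(2*a^2) - 1/(2*b^2)| ≤ (1/c^3) * |a - b| := by
  have ha0 : 0 < a := lt_of_lt_of_le hc ha
  have hb0 : 0 < b := lt_of_lt_of_le hc hb
  have key : 1/(2*a^2) - 1/(2*b^2) = ((b-a)*(b+a))/(2*a^2*b^2) := by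
    field_simp; ring
  have h2 : |2*a^2*b^2| = 2*a^2*b^2 := abs_of_pos (by positivity)
  rw [key, abs_div, abs_mul, h2, abs_sub_comm b a, div_le_iff₀ (by positivity)]
  have k1 : c^3 ≤ a*b^2 := by
    have : c*c^2 ≤ a*b^2 :=
      mul_le_mul ha (by nlinarith) (by positivity) ha0.le
    nlinarith
  have k2 : c^3 ≤ b*a^2 := by
    have : c*c^2 ≤ b*a^2 :=
      mul_le_mul hb (by nlinarith) (by positivity) hb0.le
    nlinarith
  have h5 : |b+a| ≤ 2*a^2*b^2/c^3 := by
    rw [abs_of_pos (by linarith), le_div_iff₀ (by positivity)]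
    nlinarith
  calc |a-b| * |b+a| ≤ |a-b| * (2*a^2*b^2/c^3) :=
        mul_le_mul_of_nonneg_left h5 (abs_nonneg _)
    _ = 1/c^3 * |a-b| * (2*a^2*b^2) := by
        rw [div_eq_mul_inv, one_div]; ring

lemma vf_lipschitz {M c d : ℝ} (hM : 0 < M) (hc : 0 < c) :
    LipschitzWith (⟨max (1/c^3) M, le_max_of_le_right hM.le⟩ : NNReal) (vf M c d) := by
  apply LipschitzWith.of_dist_le_mul
  intro p q
  rw [Prod.dist_eq, Prod.dist_eq]
  simp only [Real.dist_eq, NNReal.coe_mk, vf]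
  have hKnn : (0:ℝ) ≤ max (1/c^3) M := le_trans (by positivity) (le_max_left _ _)
  apply max_le
  · calc |(1/(2*(max p.2 c)^2) - 1/2) - (1/(2*(max q.2 c)^2) - 1/2)|
        = |1/(2*(max p.2 c)^2) - 1/(2*(max q.2 c)^2)| := by ring_nf
      _ ≤ (1/c^3) * |max p.2 c - max q.2 c| := inv_sq_lip hc (le_max_right _ _) (le_max_right _ _)
      _ ≤ (1/c^3) * |p.2 - q.2| := by
          exact mul_le_mul_of_nonneg_left (abs_max_sub_max_le_abs _ _ _) (by positivity)
      _ ≤ max (1/c^3) M * max |p.1 - q.1| |p.2 - q.2| :=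
          mul_le_mul (le_max_left _ _) (le_max_right _ _) (abs_nonneg _) hKnn
  · calc |M * cl d p.1 - M * cl d q.1| = M * |cl d p.1 - cl d q.1| := by
          rw [← mul_sub, abs_mul, abs_of_pos hM]
      _ ≤ M * |p.1 - q.1| := mul_le_mul_of_nonneg_left (cl_lip d _ _) hM.le
      _ ≤ max (1/c^3) M * max |p.1 - q.1| |p.2 - q.2| :=
          mul_le_mul (le_max_right _ _) (le_max_left _ _) (abs_nonneg _) hKnn

lemma vf_bound {M c d : ℝ} (hM : 0 < M) (hc : 0 < c) (hd : 0 ≤ d) (p : ℝ × ℝ) :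
    ‖vf M c d p‖ ≤ max (1/(2*c^2) + 1/2) (M*d) := by
  rw [Prod.norm_def]
  apply max_le
  · refine le_trans ?_ (le_max_left _ _)
    rw [Real.norm_eq_abs]
    have h1 : 0 < max p.2 c := lt_max_of_lt_right hc
    have h2 : 1/(2*(max p.2 c)^2) ≤ 1/(2*c^2) := by
      apply div_le_div_of_nonneg_left one_pos.le (by positivity)
      have := le_max_right p.2 c
      nlinarith
    have h3 : (0:ℝ) < 1/(2*(max p.2 c)^2) := by positivity
    rw [abs_le]; constructor <;> simp only [vf] <;> nlinarith
  · refine le_trans ?_ (le_max_right _ _)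
    simp only [vf, Real.norm_eq_abs]
    rw [abs_mul, abs_of_pos hM]
    exact mul_le_mul_of_nonneg_left (cl_abs_le hd) hM.le

/-- Global uniqueness for globally-Lipschitz autonomous fields. -/
lemma glob_unique {F : ℝ × ℝ → ℝ × ℝ} {K : NNReal} (hK : LipschitzWith K F)
    {f g : ℝ → ℝ × ℝ} {t₀ : ℝ}
    (hf : ∀ t, HasDerivAt f (F (f t)) t) (hg : ∀ t, HasDerivAt g (F (g t)) t)
    (heq : f t₀ = g t₀) : ∀ t, f t = g t := by
  intro t
  have hmem : t ∈ Ioo (t₀ - (|t - t₀| + 1)) (t₀ + (|t - t₀| + 1)) := by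
    constructor <;> cases' abs_cases (t - t₀) with H H <;> linarith [H.1]
  have ht₀ : t₀ ∈ Ioo (t₀ - (|t - t₀| + 1)) (t₀ + (|t - t₀| + 1)) := by
    constructor <;> linarith [abs_nonneg (t - t₀)]
  exact ODE_solution_unique_of_mem_Ioo (v := fun _ x => F x) (s := fun _ => univ)
    (fun _ _ => LipschitzWith.lipschitzOnWith hK (s := univ)) ht₀
    (fun t _ => ⟨hf t, mem_univ _⟩) (fun t _ => ⟨hg t, mem_univ _⟩) heq hmem

/-- Global existence for bounded globally-Lipschitz autonomous fields. -/
lemma glob_exists {F : ℝ × ℝ → ℝ × ℝ} {K : NNReal} {C : ℝ} (hK : LipschitzWith K F)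
    (hC : ∀ p, ‖F p‖ ≤ C) (t₀ : ℝ) (p₀ : ℝ × ℝ) :
    ∃ f : ℝ → ℝ × ℝ, f t₀ = p₀ ∧ ∀ t, HasDerivAt f (F (f t)) t := by
  have hC0 : 0 ≤ C := le_trans (norm_nonneg _) (hC p₀)
  have EX : ∀ n : ℕ, ∃ f : ℝ → ℝ × ℝ, f t₀ = p₀ ∧
      ∀ t ∈ Ioo (t₀ - (n+1)) (t₀ + (n+1)), HasDerivAt f (F (f t)) t := by
    intro n
    have ht0 : t₀ ∈ Icc (t₀ - (n+1)) (t₀ + (n+1)) := by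
      constructor <;> linarith [(Nat.cast_nonneg n : (0:ℝ) ≤ n)]
    have hpl : IsPicardLindelof (fun _ x => F x) (tmin := t₀ - (n+1)) (tmax := t₀ + (n+1))
        ⟨t₀, ht0⟩ p₀ ⟨C*(n+1), by positivity⟩ 0 ⟨C, hC0⟩ K := by
      refine ⟨fun _ _ => LipschitzWith.lipschitzOnWith hK,
        fun _ _ => continuousOn_const, fun _ _ x _ => hC x, ?_⟩
      · have hmx : max ((t₀ + (n+1)) - t₀) (t₀ - (t₀ - (n+1))) = (n+1:ℝ) := by simp
        simp only [NNReal.coe_mk, NNReal.coe_zero, sub_zero]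
        rw [hmx]
        exact le_rfl
    obtain ⟨f, hf0, hf⟩ := hpl.exists_eq_forall_mem_Icc_hasDerivWithinAt₀
    exact ⟨f, hf0, fun t ht => (hf t (Ioo_subset_Icc_self ht)).hasDerivAt
      (Icc_mem_nhds ht.1 ht.2)⟩
  choose sol hsol0 hsol using EX
  have hcons : ∀ m n : ℕ, m ≤ n → ∀ t ∈ Ioo (t₀ - (m+1)) (t₀ + (m+1)), sol m t = sol n t := by
    intro m n hmn t ht
    have hsub : Ioo (t₀ - (m+1:ℝ)) (t₀ + (m+1)) ⊆ Ioo (t₀ - (n+1)) (t₀ + (n+1)) := by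
      apply Ioo_subset_Ioo <;> · have : (m:ℝ) ≤ n := Nat.cast_le.2 hmn; linarith
    have ht₀ : t₀ ∈ Ioo (t₀ - (m+1:ℝ)) (t₀ + (m+1)) := by
      constructor <;> · simp; positivity
    exact ODE_solution_unique_of_mem_Ioo (v := fun _ x => F x) (s := fun _ => univ)
      (fun _ _ => LipschitzWith.lipschitzOnWith hK (s := univ)) ht₀
      (fun u hu => ⟨hsol m u hu, mem_univ _⟩)
      (fun u hu => ⟨hsol n u (hsub hu), mem_univ _⟩)
      ((hsol0 m).trans (hsol0 n).symm) ht
  set idx : ℝ → ℕ := fun t => ⌈|t - t₀|⌉₊ with hidx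
  have hmem : ∀ (t : ℝ) (n : ℕ), idx t ≤ n → t ∈ Ioo (t₀ - (n+1:ℝ)) (t₀ + (n+1)) := by
    intro t n hn
    have h1 : |t - t₀| ≤ n := le_trans (Nat.le_ceil _) (Nat.cast_le.2 hn)
    cases' abs_cases (t - t₀) with H H <;> constructor <;> linarith [H.1]
  refine ⟨fun t => sol (idx t) t, by simpa using hsol0 (idx t₀), fun t => ?_⟩
  set N := idx t + 1 with hN
  have hloc : ∀ u ∈ Ioo (t - 1) (t + 1), sol (idx u) u = sol N u := by
    intro u hu
    have h0 : |u - t₀| ≤ |t - t₀| + 1 := by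
      have h2 : |u - t₀| ≤ |u - t| + |t - t₀| := abs_sub_le _ _ _
      have h3 : |u - t| ≤ 1 := by
        rw [abs_le]; constructor <;> linarith [hu.1, hu.2]
      linarith
    have h1 : idx u ≤ N := by
      calc idx u ≤ ⌈|t - t₀| + 1⌉₊ := Nat.ceil_le_ceil h0
        _ = idx t + 1 := by
            rw [hidx]; exact_mod_cast Nat.ceil_add_one (abs_nonneg (t - t₀))
    exact hcons (idx u) N h1 u (hmem u (idx u) le_rfl)
  have heq : (fun u => sol (idx u) u) =ᶠ[nhds t] sol N :=
    Filter.eventuallyEq_of_mem (Ioo_mem_nhds (by linarith) (by linarith)) hloc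
  have hd : HasDerivAt (sol N) (F (sol N t)) t :=
    hsol N t (hmem t N (by omega))
  have hv : sol (idx t) t = sol N t := hloc t ⟨by linarith, by linarith⟩
  rw [show (fun t => sol (idx t) t) t = sol N t from hv]
  exact hd.congr_of_eventuallyEq heq

end S13

namespace S13

/-- derivative of first component -/
lemma hasDerivAt_comp_fst {f : ℝ → ℝ × ℝ} {p' : ℝ × ℝ} {ξ : ℝ}
    (hf : HasDerivAt f p' ξ) : HasDerivAt (fun t => (f t).1) p'.1 ξ := by
  have h := (hasFDerivAt_fst (𝕜 := ℝ) (p := f ξ)).comp ξ hf.hasFDerivAt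
  simpa [Function.comp_def] using h.hasDerivAt

lemma hasDerivAt_comp_snd {f : ℝ → ℝ × ℝ} {p' : ℝ × ℝ} {ξ : ℝ}
    (hf : HasDerivAt f p' ξ) : HasDerivAt (fun t => (f t).2) p'.2 ξ := by
  have h := (hasFDerivAt_snd (𝕜 := ℝ) (p := f ξ)).comp ξ hf.hasFDerivAt
  simpa [Function.comp_def] using h.hasDerivAt

/-- The specific field for our problem. -/
noncomputable def FF (M h : ℝ) : ℝ × ℝ → ℝ × ℝ := vf M (sLo h / 2) (dM M h + 1)

lemma FF_eq (hM : 0 < M) (hh : 1 < h) {p : ℝ × ℝ} (h1 : sLo h ≤ p.2)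
    (h2 : |p.1| ≤ dM M h) : FF M h p = (1/(2*p.2^2) - 1/2, M * p.1) := by
  have hs := sLo_pos hh
  have hmax : max p.2 (sLo h / 2) = p.2 := max_eq_left (by linarith)
  have hcl : cl (dM M h + 1) p.1 = p.1 := cl_eq_self (by linarith)
  simp only [FF, vf, hmax, hcl]

/-- Energy has zero derivative along trajectories. -/
lemma energy_deriv {M : ℝ} {D S : ℝ → ℝ} {ξ : ℝ} (hS : S ξ ≠ 0)
    (hD' : HasDerivAt D (1/(2*(S ξ)^2) - 1/2) ξ) (hS' : HasDerivAt S (M * D ξ) ξ) :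
    HasDerivAt (fun t => (S t^2+1)/(2*S t) + M*(D t)^2/2) 0 ξ := by
  have hne : (2:ℝ) * S ξ ≠ 0 := by simpa using hS
  have h1 := ((hS'.pow 2).add_const 1).div (hS'.const_mul 2) hne
  have h2 := ((hD'.pow 2).const_mul M).div_const 2
  have h3 := h1.add h2
  refine h3.congr_deriv ?_
  simp only [Pi.pow_apply]
  field_simp
  ring

lemma const_of_deriv_zero_ball {ψ : ℝ → ℝ} {t ε : ℝ}
    (hder : ∀ u ∈ Metric.ball t ε, HasDerivAt ψ 0 u) :
    ∀ u ∈ Metric.ball t ε, ψ u = ψ t := by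
  intro u hu
  have htm : t ∈ Metric.ball t ε := Metric.mem_ball_self (by
    rcases Metric.nonempty_ball.1 ⟨u, hu⟩ with h; exact h)
  have hconv : ∀ a b : ℝ, a ∈ Metric.ball t ε → b ∈ Metric.ball t ε →
      Icc a b ⊆ Metric.ball t ε := by
    intro a b ha hb x hx
    rw [Real.ball_eq_Ioo] at ha hb ⊢
    exact ⟨lt_of_lt_of_le ha.1 hx.1, lt_of_le_of_lt hx.2 hb.2⟩
  rcases le_total u t with H | H
  · have hsub := hconv u t hu htm
    have := constant_of_has_deriv_right_zero
      (fun x hx => (hder x (hsub hx)).continuousAt.continuousWithinAt)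
      (fun x hx => (hder x (hsub (Ico_subset_Icc_self hx))).hasDerivWithinAt)
    exact ((this t ⟨H, le_rfl⟩)).symm ▸ rfl
  · have hsub := hconv t u htm hu
    have := constant_of_has_deriv_right_zero
      (fun x hx => (hder x (hsub hx)).continuousAt.continuousWithinAt)
      (fun x hx => (hder x (hsub (Ico_subset_Icc_self hx))).hasDerivWithinAt)
    exact this u ⟨H, le_rfl⟩

/-- Invariance of the energy level set. -/
lemma invariant {M h : ℝ} (hM : 0 < M) (hh : 1 < h) {f : ℝ → ℝ × ℝ}
    (hf : ∀ t, HasDerivAt f (FF M h (f t)) t) {t₀ : ℝ}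
    (hE0 : En M (f t₀) = h) (hs0 : 0 < (f t₀).2) :
    ∀ t, En M (f t) = h ∧ sLo h ≤ (f t).2 ∧ (f t).2 ≤ sHi h ∧ |(f t).1| ≤ dM M h := by
  set D : ℝ → ℝ := fun t => (f t).1 with hDdef
  set S : ℝ → ℝ := fun t => (f t).2 with hSdef
  have hslo := sLo_pos hh
  have hfc : Continuous f := by
    rw [continuous_iff_continuousAt]; exact fun t => (hf t).continuousAt
  have hDc : Continuous D := (continuous_fst.comp hfc)
  have hSc : Continuous S := (continuous_snd.comp hfc)
  -- modified energy, globally continuous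
  set E' : ℝ × ℝ → ℝ := fun p => (p.2^2+1)/(2*max p.2 (sLo h)) + M*p.1^2/2 with hE'def
  have hE'c : Continuous E' := by
    apply Continuous.add
    · apply Continuous.div
      · exact (continuous_snd.pow 2).add continuous_const
      · exact continuous_const.mul (continuous_snd.max continuous_const)
      · intro p
        have : sLo h ≤ max p.2 (sLo h) := le_max_right _ _
        positivity
    · exact (continuous_const.mul (continuous_fst.pow 2)).div_const 2
  have hE'eq : ∀ p : ℝ × ℝ, sLo h ≤ p.2 → E' p = En M p := by
    intro p hp
    simp only [hE'def, En, max_eq_left hp]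
  set B : Set ℝ := {t | E' (f t) = h ∧ sLo h ≤ S t} with hBdef
  have hBclosed : IsClosed B := by
    apply IsClosed.inter
    · exact isClosed_eq (hE'c.comp hfc) continuous_const
    · exact isClosed_le continuous_const hSc
  have hBopen : IsOpen B := by
    rw [Metric.isOpen_iff]
    intro t ht
    obtain ⟨hEt, hSt⟩ := ht
    have hEn_t : En M (f t) = h := (hE'eq (f t) hSt).symm.trans hEt
    have hbd := level_bounds hM hh (lt_of_lt_of_le hslo hSt) hEn_t
    -- find ball where S > sLo/2 and |D| < dM + 1
    have hopen : IsOpen {u : ℝ | sLo h / 2 < S u ∧ |D u| < dM M h + 1} := by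
      apply IsOpen.inter
      · exact isOpen_lt continuous_const hSc
      · exact isOpen_lt (continuous_abs.comp hDc) continuous_const
    have htin : t ∈ {u : ℝ | sLo h / 2 < S u ∧ |D u| < dM M h + 1} :=
      ⟨by linarith, by linarith [hbd.2.2]⟩
    obtain ⟨ε, hε, hball⟩ := Metric.isOpen_iff.1 hopen t htin
    refine ⟨ε, hε, fun u hu => ?_⟩
    -- on the ball, the energy is constant
    have hder : ∀ u ∈ Metric.ball t ε, HasDerivAt (fun x => (S x^2+1)/(2*S x) + M*(D x)^2/2) 0 u := by
      intro u hu
      obtain ⟨h1, h2⟩ := hball hu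
      have hSu : 0 < S u := lt_trans (by linarith) h1
      have hmax : max (S u) (sLo h / 2) = S u := max_eq_left (by linarith)
      have hcl : cl (dM M h + 1) (D u) = D u := cl_eq_self h2.le
      have hD' : HasDerivAt D (1/(2*(S u)^2) - 1/2) u := by
        have := hasDerivAt_comp_fst (hf u)
        change HasDerivAt D (FF M h (D u, S u)).1 u at this
        simpa only [FF, vf, hmax] using this
      have hS' : HasDerivAt S (M * D u) u := by
        have := hasDerivAt_comp_snd (hf u)
        change HasDerivAt S (FF M h (D u, S u)).2 u at this
        simpa only [FF, vf, hcl] using this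
      exact energy_deriv hSu.ne' hD' hS'
    have hconst := const_of_deriv_zero_ball hder u hu
    have hEn_u : En M (f u) = h := by
      have e1 : (S u^2+1)/(2*S u) + M*(D u)^2/2 = En M (f u) := rfl
      have e2 : (S t^2+1)/(2*S t) + M*(D t)^2/2 = En M (f t) := rfl
      rw [← e1, hconst, e2, hEn_t]
    have hSu : 0 < S u := lt_trans (by linarith) (hball hu).1
    have hbd_u := level_bounds hM hh hSu hEn_u
    exact ⟨(hE'eq (f u) hbd_u.1).trans hEn_u, hbd_u.1⟩
  have hBne : B.Nonempty := by
    have hb := level_bounds hM hh hs0 hE0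
    exact ⟨t₀, (hE'eq (f t₀) hb.1).trans hE0, hb.1⟩
  have hBuniv : B = univ := IsClopen.eq_univ ⟨hBclosed, hBopen⟩ hBne
  intro t
  have ht : t ∈ B := hBuniv ▸ mem_univ t
  have hEn_t : En M (f t) = h := (hE'eq (f t) ht.2).symm.trans ht.1
  have hbd := level_bounds hM hh (lt_of_lt_of_le hslo ht.2) hEn_t
  exact ⟨hEn_t, hbd⟩

end S13

namespace S13

/-- Linear growth from a derivative lower bound. -/
lemma deriv_ge_linear {φ d : ℝ → ℝ} {T c : ℝ}
    (hφ : ∀ ξ, T ≤ ξ → HasDerivAt φ (d ξ) ξ) (hc : ∀ ξ, T ≤ ξ → c ≤ d ξ) :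
    ∀ ξ, T ≤ ξ → φ T + c*(ξ - T) ≤ φ ξ := by
  intro ξ hξ
  set ψ : ℝ → ℝ := fun x => φ x - c*x with hψ
  have hψd : ∀ x, T ≤ x → HasDerivAt ψ (d x - c) x := by
    intro x hx
    have h2 : HasDerivAt (fun y : ℝ => c*y) (c*1) x := (hasDerivAt_id x).const_mul c
    have := (hφ x hx).sub h2; rw [mul_one] at this; exact this
  have hmono : MonotoneOn ψ (Ici T) := by
    apply monotoneOn_of_deriv_nonneg (convex_Ici T)
    · exact fun x hx => ((hψd x hx).continuousAt).continuousWithinAt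
    · intro x hx
      rw [interior_Ici] at hx
      exact ((hψd x (le_of_lt hx)).differentiableAt).differentiableWithinAt
    · intro x hx
      rw [interior_Ici] at hx
      rw [(hψd x (le_of_lt hx)).deriv]
      linarith [hc x (le_of_lt hx)]
  have := hmono (self_mem_Ici) (mem_Ici.2 hξ) hξ
  simp only [hψ] at this
  linarith

section traj

variable {M h : ℝ} {f : ℝ → ℝ × ℝ}

/-- Derived component ODEs. -/
lemma compD (hM : 0 < M) (hh : 1 < h)
    (hf : ∀ t, HasDerivAt f (FF M h (f t)) t)
    (hinv : ∀ t, En M (f t) = h ∧ sLo h ≤ (f t).2 ∧ (f t).2 ≤ sHi h ∧ |(f t).1| ≤ dM M h)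
    (t : ℝ) : HasDerivAt (fun u => (f u).1) (1/(2*((f t).2)^2) - 1/2) t := by
  have := hasDerivAt_comp_fst (hf t)
  rwa [FF_eq hM hh (hinv t).2.1 (hinv t).2.2.2] at this

lemma compS (hM : 0 < M) (hh : 1 < h)
    (hf : ∀ t, HasDerivAt f (FF M h (f t)) t)
    (hinv : ∀ t, En M (f t) = h ∧ sLo h ≤ (f t).2 ∧ (f t).2 ≤ sHi h ∧ |(f t).1| ≤ dM M h)
    (t : ℝ) : HasDerivAt (fun u => (f u).2) (M * (f t).1) t := by
  have := hasDerivAt_comp_snd (hf t)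
  rwa [FF_eq hM hh (hinv t).2.1 (hinv t).2.2.2] at this

lemma no_escape_pos (hM : 0 < M) (hh : 1 < h)
    (hf : ∀ t, HasDerivAt f (FF M h (f t)) t)
    (hinv : ∀ t, En M (f t) = h ∧ sLo h ≤ (f t).2 ∧ (f t).2 ≤ sHi h ∧ |(f t).1| ≤ dM M h)
    (T : ℝ) (hpos : ∀ ξ, T ≤ ξ → 0 < (f ξ).1) : False := by
  have hslo := sLo_pos hh
  have hSpos : ∀ t, 0 < (f t).2 := fun t => lt_of_lt_of_le hslo (hinv t).2.1
  by_cases hcase : ∃ ξ₂, T ≤ ξ₂ ∧ 1 < (f ξ₂).2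
  · obtain ⟨ξ₂, hξ₂T, hS2⟩ := hcase
    -- S is monotone increasing on [ξ₂, ∞)
    have hSmono : ∀ x, ξ₂ ≤ x → (f ξ₂).2 ≤ (f x).2 := by
      intro x hx
      have hh2 : (f ξ₂).2 + 0 * (x - ξ₂) ≤ (f x).2 :=
        deriv_ge_linear (φ := fun u => (f u).2) (d := fun u => M * (f u).1)
        (T := ξ₂) (c := 0)
        (fun u hu => compS hM hh hf hinv u)
        (fun u hu => le_of_lt (mul_pos hM (hpos u (le_trans hξ₂T hu)))) x hx
      linarith
    set c₀ : ℝ := ((f ξ₂).2^2 - 1)/(2*(sHi h)^2) with hc₀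
    have hsHi := sHi_pos hh
    have hc₀pos : 0 < c₀ := by
      apply div_pos (by nlinarith) (by positivity)
    have hbound : ∀ x, ξ₂ ≤ x → c₀ ≤ -(1/(2*((f x).2)^2) - 1/2) := by
      intro x hx
      have h1 : (f ξ₂).2 ≤ (f x).2 := hSmono x hx
      have h2 : (f x).2 ≤ sHi h := (hinv x).2.2.1
      have h3 : 0 < (f x).2 := hSpos x
      have e : -(1/(2*((f x).2)^2) - 1/2) = ((f x).2^2 - 1)/(2*((f x).2)^2) := by
        field_simp; ring
      rw [e, hc₀, div_le_div_iff₀ (by positivity) (by positivity)]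
      nlinarith [mul_le_mul (show (f ξ₂).2^2 - 1 ≤ (f x).2^2 - 1 by nlinarith)
        (show ((f x).2)^2 ≤ (sHi h)^2 by nlinarith) (by positivity) (by nlinarith)]
    have hgrow := deriv_ge_linear (φ := fun u => -(f u).1)
      (d := fun u => -(1/(2*((f u).2)^2) - 1/2)) (T := ξ₂) (c := c₀)
      (fun u hu => (compD hM hh hf hinv u).neg) hbound
    have hDpos := hpos ξ₂ hξ₂T
    have hξge : ξ₂ ≤ ξ₂ + ((f ξ₂).1 + 1)/c₀ := by
      have : 0 < ((f ξ₂).1 + 1)/c₀ := div_pos (by linarith) hc₀pos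
      linarith
    have hg2 : -(f ξ₂).1 + c₀ * ((ξ₂ + ((f ξ₂).1 + 1)/c₀) - ξ₂)
        ≤ -(f (ξ₂ + ((f ξ₂).1 + 1)/c₀)).1 := hgrow _ hξge
    have hval : c₀ * ((ξ₂ + ((f ξ₂).1 + 1)/c₀) - ξ₂) = (f ξ₂).1 + 1 := by
      field_simp; ring
    have hfin := hpos _ (le_trans hξ₂T hξge)
    rw [hval] at hg2
    linarith
  · push_neg at hcase
    -- S ≤ 1 always, so D is nondecreasing: D ≥ D T > 0, S grows linearly, contradiction
    have hD'nonneg : ∀ x, T ≤ x → (0:ℝ) ≤ 1/(2*((f x).2)^2) - 1/2 := by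
      intro x hx
      have h1 : (f x).2 ≤ 1 := hcase x hx
      have h3 : 0 < (f x).2 := hSpos x
      have : 2*((f x).2)^2 ≤ 2 := by nlinarith
      have h4 : (1:ℝ)/2 ≤ 1/(2*((f x).2)^2) := by
        apply div_le_div_of_nonneg_left one_pos.le (by positivity) this
      linarith
    have hDlow := deriv_ge_linear (φ := fun u => (f u).1)
      (d := fun u => 1/(2*((f u).2)^2) - 1/2) (T := T) (c := 0)
      (fun u hu => compD hM hh hf hinv u) (fun u hu => hD'nonneg u hu)
    have hd₀pos : 0 < (f T).1 := hpos T le_rfl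
    have hSgrow := deriv_ge_linear (φ := fun u => (f u).2)
      (d := fun u => M * (f u).1) (T := T) (c := M * (f T).1)
      (fun u hu => compS hM hh hf hinv u)
      (fun u hu => by
        have h6 : (f T).1 + 0 * (u - T) ≤ (f u).1 := hDlow u hu
        show M * (f T).1 ≤ M * (f u).1
        nlinarith)
    have hnum : 0 < 2 - (f T).2 := by linarith [hcase T le_rfl]
    have hξge : T ≤ T + (2 - (f T).2)/(M*(f T).1) := by
      have : 0 < (2 - (f T).2)/(M*(f T).1) := div_pos hnum (by positivity)
      linarith
    have hg2 : (f T).2 + (M*(f T).1) * ((T + (2 - (f T).2)/(M*(f T).1)) - T)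
        ≤ (f (T + (2 - (f T).2)/(M*(f T).1))).2 := hSgrow _ hξge
    have hval : (M*(f T).1) * ((T + (2 - (f T).2)/(M*(f T).1)) - T) = 2 - (f T).2 := by
      have hMd : M*(f T).1 ≠ 0 := by positivity
      field_simp; ring
    have hfin : (f (T + (2 - (f T).2)/(M*(f T).1))).2 ≤ 1 := hcase _ hξge
    rw [hval] at hg2
    linarith

lemma no_escape_neg (hM : 0 < M) (hh : 1 < h)
    (hf : ∀ t, HasDerivAt f (FF M h (f t)) t)
    (hinv : ∀ t, En M (f t) = h ∧ sLo h ≤ (f t).2 ∧ (f t).2 ≤ sHi h ∧ |(f t).1| ≤ dM M h)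
    (T : ℝ) (hneg : ∀ ξ, T ≤ ξ → (f ξ).1 < 0) : False := by
  have hslo := sLo_pos hh
  have hSpos : ∀ t, 0 < (f t).2 := fun t => lt_of_lt_of_le hslo (hinv t).2.1
  by_cases hcase : ∃ ξ₂, T ≤ ξ₂ ∧ (f ξ₂).2 < 1
  · obtain ⟨ξ₂, hξ₂T, hS2⟩ := hcase
    -- S is decreasing on [ξ₂,∞)
    have hSanti : ∀ x, ξ₂ ≤ x → (f x).2 ≤ (f ξ₂).2 := by
      intro x hx
      have hh2 : -(f ξ₂).2 + 0 * (x - ξ₂) ≤ -(f x).2 :=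
        deriv_ge_linear (φ := fun u => -(f u).2) (d := fun u => -(M * (f u).1))
        (T := ξ₂) (c := 0)
        (fun u hu => (compS hM hh hf hinv u).neg)
        (fun u hu => by
          show (0:ℝ) ≤ -(M * (f u).1)
          nlinarith [hneg u (le_trans hξ₂T hu)]) x hx
      linarith
    set c₀ : ℝ := (1 - (f ξ₂).2^2)/2 with hc₀
    have hc₀pos : 0 < c₀ := by
      have := hSpos ξ₂; apply div_pos (by nlinarith) (by norm_num)
    have hbound : ∀ x, ξ₂ ≤ x → c₀ ≤ 1/(2*((f x).2)^2) - 1/2 := by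
      intro x hx
      have h1 : (f x).2 ≤ (f ξ₂).2 := hSanti x hx
      have h3 : 0 < (f x).2 := hSpos x
      have h5 : (0:ℝ) < 2*((f x).2)^2 := by positivity
      have key : (c₀ + 1/2) * (2*((f x).2)^2) ≤ 1 := by
        have e : (c₀ + 1/2) * (2*((f x).2)^2) = (2 - (f ξ₂).2^2) * ((f x).2)^2 := by
          rw [hc₀]; ring
        rw [e]
        have hu : (f x).2^2 ≤ (f ξ₂).2^2 := by nlinarith
        have hv : (0:ℝ) ≤ 2 - (f ξ₂).2^2 := by nlinarith
        nlinarith [sq_nonneg ((f ξ₂).2^2 - 1),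
          mul_le_mul_of_nonneg_left hu hv]
      have : c₀ + 1/2 ≤ 1/(2*((f x).2)^2) := by
        rw [le_div_iff₀ h5]; linarith
      linarith
    have hgrow := deriv_ge_linear (φ := fun u => (f u).1)
      (d := fun u => 1/(2*((f u).2)^2) - 1/2) (T := ξ₂) (c := c₀)
      (fun u hu => compD hM hh hf hinv u) hbound
    have hDneg := hneg ξ₂ hξ₂T
    have hξge : ξ₂ ≤ ξ₂ + (-(f ξ₂).1 + 1)/c₀ := by
      have : 0 < (-(f ξ₂).1 + 1)/c₀ := div_pos (by linarith) hc₀pos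
      linarith
    have hg2 : (f ξ₂).1 + c₀ * ((ξ₂ + (-(f ξ₂).1 + 1)/c₀) - ξ₂)
        ≤ (f (ξ₂ + (-(f ξ₂).1 + 1)/c₀)).1 := hgrow _ hξge
    have hval : c₀ * ((ξ₂ + (-(f ξ₂).1 + 1)/c₀) - ξ₂) = -(f ξ₂).1 + 1 := by
      field_simp; ring
    have hfin := hneg _ (le_trans hξ₂T hξge)
    rw [hval] at hg2
    linarith
  · push_neg at hcase
    -- S ≥ 1 always: D decreasing, D ≤ D T < 0, S decreases linearly below 1
    have hD'nonpos : ∀ x, T ≤ x → 1/(2*((f x).2)^2) - 1/2 ≤ 0 := by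
      intro x hx
      have h1 : 1 ≤ (f x).2 := hcase x hx
      have : (2:ℝ) ≤ 2*((f x).2)^2 := by nlinarith
      have h4 : 1/(2*((f x).2)^2) ≤ (1:ℝ)/2 := by
        apply div_le_div_of_nonneg_left one_pos.le (by norm_num) this
      linarith
    have hDhigh := deriv_ge_linear (φ := fun u => -(f u).1)
      (d := fun u => -(1/(2*((f u).2)^2) - 1/2)) (T := T) (c := 0)
      (fun u hu => (compD hM hh hf hinv u).neg)
      (fun u hu => by linarith [hD'nonpos u hu])
    have hd₀pos : 0 < -(f T).1 := by linarith [hneg T le_rfl]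
    have hSdec := deriv_ge_linear (φ := fun u => -(f u).2)
      (d := fun u => -(M * (f u).1)) (T := T) (c := M * (-(f T).1))
      (fun u hu => (compS hM hh hf hinv u).neg)
      (fun u hu => by
        have h6 : -(f T).1 + 0 * (u - T) ≤ -(f u).1 := hDhigh u hu
        show M * (-(f T).1) ≤ -(M * (f u).1)
        nlinarith)
    have hξge : T ≤ T + (f T).2/(M*(-(f T).1)) := by
      have : 0 < (f T).2/(M*(-(f T).1)) := div_pos (hSpos T) (by positivity)
      linarith
    have hg2 : -(f T).2 + (M*(-(f T).1)) * ((T + (f T).2/(M*(-(f T).1))) - T)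
        ≤ -(f (T + (f T).2/(M*(-(f T).1)))).2 := hSdec _ hξge
    have hval : (M*(-(f T).1)) * ((T + (f T).2/(M*(-(f T).1))) - T) = (f T).2 := by
      have h7 : (f T).1 ≠ 0 := ne_of_lt (hneg T le_rfl)
      field_simp
      ring
    have hfin : 1 ≤ (f (T + (f T).2/(M*(-(f T).1)))).2 := hcase _ hξge
    rw [hval] at hg2
    linarith

/-- Existence of a zero of D to the right of any time. -/
lemma exists_zero_fwd (hM : 0 < M) (hh : 1 < h)
    (hf : ∀ t, HasDerivAt f (FF M h (f t)) t)
    (hinv : ∀ t, En M (f t) = h ∧ sLo h ≤ (f t).2 ∧ (f t).2 ≤ sHi h ∧ |(f t).1| ≤ dM M h)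
    (T : ℝ) : ∃ ξ, T ≤ ξ ∧ (f ξ).1 = 0 := by
  by_contra hcon
  push_neg at hcon
  have hDc : Continuous (fun t => (f t).1) := by
    rw [continuous_iff_continuousAt]
    exact fun t => (compD hM hh hf hinv t).continuousAt
  -- constant sign
  rcases lt_trichotomy ((f T).1) 0 with hTneg | hTzero | hTpos
  · -- all negative: else IVT gives a zero
    apply no_escape_neg hM hh hf hinv T
    intro ξ hξ
    rcases lt_trichotomy ((f ξ).1) 0 with H | H | H
    · exact H
    · exact absurd H (hcon ξ hξ)
    · exfalso
      have hTξ : T ≤ ξ := hξ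
      have := intermediate_value_Icc hTξ (hDc.continuousOn)
      have h0 : (0:ℝ) ∈ Icc ((f T).1) ((f ξ).1) := ⟨hTneg.le, H.le⟩
      obtain ⟨x, hx, hx0⟩ := this h0
      exact hcon x hx.1 hx0
  · exact (hcon T le_rfl) hTzero
  · apply no_escape_pos hM hh hf hinv T
    intro ξ hξ
    rcases lt_trichotomy ((f ξ).1) 0 with H | H | H
    · exfalso
      have := intermediate_value_Icc' hξ (hDc.continuousOn)
      have h0 : (0:ℝ) ∈ Icc ((f ξ).1) ((f T).1) := ⟨H.le, hTpos.le⟩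
      obtain ⟨x, hx, hx0⟩ := this h0
      exact hcon x hx.1 hx0
    · exact absurd H (hcon ξ hξ)
    · exact H

/-- Reflection symmetry about a zero of D. -/
lemma reflect (hM : 0 < M) (hh : 1 < h)
    (hf : ∀ t, HasDerivAt f (FF M h (f t)) t)
    {a : ℝ} (ha : (f a).1 = 0) :
    ∀ ξ, f (2*a - ξ) = (-(f ξ).1, (f ξ).2) := by
  have hd0 : (0:ℝ) ≤ dM M h + 1 := by
    have := Real.sqrt_nonneg (2*(h-1)/M); simp only [dM]; linarith
  set g : ℝ → ℝ × ℝ := fun ξ => (-(f (2*a - ξ)).1, (f (2*a - ξ)).2) with hg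
  have hgd : ∀ ξ, HasDerivAt g (FF M h (g ξ)) ξ := by
    intro ξ
    have hφ : HasDerivAt (fun x : ℝ => 2*a - x) (-1) ξ := by
      have := (hasDerivAt_const ξ (2*a)).sub (hasDerivAt_id ξ); rw [zero_sub] at this; exact this
    have hcomp : HasDerivAt (fun x => f (2*a - x)) ((-1 : ℝ) • FF M h (f (2*a - ξ))) ξ :=
      HasDerivAt.scomp ξ (hf (2*a - ξ)) hφ
    have h1 : HasDerivAt (fun x => -(f (2*a - x)).1)
        (-((-1 : ℝ) • FF M h (f (2*a - ξ))).1) ξ := (hasDerivAt_comp_fst hcomp).neg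
    have h2 : HasDerivAt (fun x => (f (2*a - x)).2)
        (((-1 : ℝ) • FF M h (f (2*a - ξ))).2) ξ := hasDerivAt_comp_snd hcomp
    have h3 := h1.prodMk h2
    convert h3 using 1
    have e1 : (FF M h (g ξ)).1 = (FF M h (f (2*a - ξ))).1 := by
      simp only [FF, vf, hg]
    have e2 : (FF M h (g ξ)).2 = -(FF M h (f (2*a - ξ))).2 := by
      simp only [FF, vf, hg, cl_neg hd0]
      ring
    rw [Prod.ext_iff]
    constructor
    · simp only [e1, Prod.smul_fst, smul_eq_mul]; ring
    · simp only [e2, Prod.smul_snd, smul_eq_mul]; ring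
  have heq : f a = g a := by
    have : (2*a - a) = a := by ring
    rw [hg]; simp only [this]
    rw [Prod.ext_iff]
    exact ⟨by simp [ha], rfl⟩
  have huniq := glob_unique (vf_lipschitz hM (by linarith [sLo_pos hh] : (0:ℝ) < sLo h / 2))
    hf hgd heq
  intro ξ
  have := huniq (2*a - ξ)
  rw [this, hg]
  have e : 2*a - (2*a - ξ) = ξ := by ring
  simp only [e]

/-- Two zeros of D give periodicity. -/
lemma periodic_of_two_zeros (hM : 0 < M) (hh : 1 < h)
    (hf : ∀ t, HasDerivAt f (FF M h (f t)) t)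
    {a b : ℝ} (ha : (f a).1 = 0) (hb : (f b).1 = 0) :
    ∀ ξ, f (ξ + 2*(b - a)) = f ξ := by
  intro ξ
  have h1 := reflect hM hh hf ha ξ
  have h2 := reflect hM hh hf hb (2*a - ξ)
  have e : 2*b - (2*a - ξ) = ξ + 2*(b - a) := by ring
  rw [e] at h2
  rw [h2, h1]
  simp

end traj

end S13

namespace S13

open MeasureTheory intervalIntegral Filter Topology

/-- Time as quadrature: if `D` is strictly increasing with `D' ξ * g (D ξ) = 1`,
then `∫ g` over the image equals the elapsed time, with a possible singularity of
`g` at the top endpoint. -/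
lemma time_eq_integral {D D' g : ℝ → ℝ} {a m : ℝ} (ham : a < m)
    (hcont : ContinuousOn D (Icc a m))
    (hmono : StrictMonoOn D (Icc a m))
    (hder : ∀ ξ ∈ Ico a m, HasDerivAt D (D' ξ) ξ)
    (hD'c : ContinuousOn D' (Ico a m))
    (hid : ∀ ξ ∈ Ico a m, D' ξ * g (D ξ) = 1)
    (hgc : ContinuousOn g (Ico (D a) (D m)))
    (hInt : IntervalIntegrable g volume (D a) (D m)) :
    ∫ x in (D a)..(D m), g x = m - a := by
  have hDaDm : D a ≤ D m := le_of_lt (hmono ⟨le_rfl, ham.le⟩ ⟨ham.le, le_rfl⟩ ham)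
  have key : ∀ t ∈ Ico a m, ∫ x in (D a)..(D t), g x = t - a := by
    intro t ht
    have huIcc : uIcc a t = Icc a t := uIcc_of_le ht.1
    have hsubt : Icc a t ⊆ Ico a m := fun x hx => ⟨hx.1, lt_of_le_of_lt hx.2 ht.2⟩
    have hsubm : Icc a t ⊆ Icc a m := fun x hx => ⟨hx.1, le_of_lt (lt_of_le_of_lt hx.2 ht.2)⟩
    have himg : D '' (uIcc a t) ⊆ Ico (D a) (D m) := by
      rintro _ ⟨x, hx, rfl⟩
      rw [huIcc] at hx
      exact ⟨hmono.monotoneOn ⟨le_rfl, ham.le⟩ (hsubm hx) hx.1,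
        hmono (hsubm hx) ⟨ham.le, le_rfl⟩ (lt_of_le_of_lt hx.2 ht.2)⟩
    have hsub' : uIcc a t ⊆ Ico a m := huIcc ▸ hsubt
    have hcv := integral_comp_smul_deriv' (a := a) (b := t) (f := D) (f' := D') (g := g)
      (fun x hx => hder x (hsub' hx)) (hD'c.mono hsub') (hgc.mono himg)
    have hone : ∫ x in a..t, D' x • (g ∘ D) x = ∫ x in a..t, (1:ℝ) := by
      apply integral_congr
      intro x hx
      have := hid x (hsub' hx)
      simpa [smul_eq_mul] using this
    rw [hone] at hcv
    rw [← hcv]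
    simp
  -- limit as t → m within [a, m)
  have hne : (𝓝[Ico a m] m).NeBot := by
    apply mem_closure_iff_nhdsWithin_neBot.mp
    rw [closure_Ico (ne_of_lt ham)]
    exact ⟨ham.le, le_rfl⟩
  have hIntOn : IntegrableOn g (uIcc (D a) (D m)) volume := by
    rw [uIcc_of_le hDaDm]
    exact (intervalIntegrable_iff_integrableOn_Icc_of_le hDaDm).1 hInt
  have hprim : ContinuousOn (fun y => ∫ x in (D a)..y, g x) (uIcc (D a) (D m)) :=
    continuousOn_primitive_interval hIntOn
  -- D tends to D m within the interval
  have hDt : Tendsto D (𝓝[Ico a m] m) (𝓝[uIcc (D a) (D m)] (D m)) := by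
    rw [tendsto_nhdsWithin_iff]
    constructor
    · have h1 : Tendsto D (𝓝[Icc a m] m) (𝓝 (D m)) :=
        (hcont m ⟨ham.le, le_rfl⟩).tendsto
      exact h1.mono_left (nhdsWithin_mono m Ico_subset_Icc_self)
    · filter_upwards [self_mem_nhdsWithin] with t ht
      rw [uIcc_of_le hDaDm]
      exact ⟨hmono.monotoneOn ⟨le_rfl, ham.le⟩ ⟨ht.1, ht.2.le⟩ ht.1,
        (hmono.monotoneOn ⟨ht.1, ht.2.le⟩ ⟨ham.le, le_rfl⟩ ht.2.le)⟩
  have hlim1 : Tendsto (fun t => ∫ x in (D a)..(D t), g x) (𝓝[Ico a m] m)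
      (𝓝 (∫ x in (D a)..(D m), g x)) :=
    ((hprim (D m) (right_mem_uIcc)).tendsto).comp hDt
  have hlim2 : Tendsto (fun t : ℝ => t - a) (𝓝[Ico a m] m) (𝓝 (m - a)) :=
    ((continuous_id.sub continuous_const).tendsto m).mono_left nhdsWithin_le_nhds
  have heq : (fun t => ∫ x in (D a)..(D t), g x) =ᶠ[𝓝[Ico a m] m] (fun t : ℝ => t - a) := by
    filter_upwards [self_mem_nhdsWithin] with t ht
    exact key t ht
  exact tendsto_nhds_unique (hlim1.congr' heq) hlim2

end S13

namespace S13

open MeasureTheory intervalIntegral Filter Topology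

/-- Integrability from an inverse-sqrt bound at the right endpoint. -/
lemma integrable_of_sqrt_bound {w : ℝ → ℝ} {b C : ℝ} (hb : 0 < b)
    (hw : ContinuousOn w (Ico 0 b))
    (hbd : ∀ x ∈ Ico 0 b, |w x| ≤ C * ((b - x) ^ (-(1/2) : ℝ))) :
    IntervalIntegrable w volume 0 b := by
  rw [intervalIntegrable_iff_integrableOn_Ioo_of_le hb.le]
  have h1 : IntervalIntegrable (fun x : ℝ => x ^ (-(1/2):ℝ)) volume 0 b :=
    intervalIntegrable_rpow' (by norm_num)
  have h2 := (h1.comp_sub_left b).symm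
  have h3 : IntervalIntegrable (fun x : ℝ => C * ((b - x) ^ (-(1/2):ℝ))) volume 0 b := by
    have := h2.const_mul C
    simpa using this
  have hmajOn : IntegrableOn (fun x => C * ((b - x) ^ (-(1/2):ℝ))) (Ioo 0 b) volume :=
    (intervalIntegrable_iff_integrableOn_Ioo_of_le hb.le).1 h3
  apply MeasureTheory.Integrable.mono' hmajOn
  · exact (hw.mono Ioo_subset_Ico_self).aestronglyMeasurable measurableSet_Ioo
  · filter_upwards [MeasureTheory.ae_restrict_mem measurableSet_Ioo] with x hx
    rw [Real.norm_eq_abs]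
    exact hbd x (Ioo_subset_Ico_self hx)

section integrands

variable {M h : ℝ}

/-- the three integrands -/
noncomputable def root (M h x : ℝ) : ℝ := Real.sqrt ((gb M h x)^2 - 1)
noncomputable def gm (M h : ℝ) : ℝ → ℝ := fun x => (gb M h x - root M h x)/root M h x
noncomputable def gp (M h : ℝ) : ℝ → ℝ := fun x => (gb M h x + root M h x)/root M h x
noncomputable def gH (M h : ℝ) : ℝ → ℝ := fun x => gb M h x/root M h x

lemma gm_add_gp (x : ℝ) : gm M h x + gp M h x = 2 * gH M h x := by
  simp only [gm, gp, gH]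
  rw [← add_div]
  ring_nf

lemma gb_gt_one (hM : 0 < M) (hh : 1 < h) {x : ℝ} (hx : |x| < dM M h) :
    1 < gb M h x := by
  have h1 : x^2 < (dM M h)^2 := by
    have := abs_nonneg x
    nlinarith [sq_abs x]
  have h2 := dM_sq' hM hh
  simp only [gb]
  nlinarith

lemma gb_le_h (hM : 0 < M) (x : ℝ) : gb M h x ≤ h := by
  simp only [gb]; nlinarith [sq_nonneg x]

lemma root_pos (hM : 0 < M) (hh : 1 < h) {x : ℝ} (hx : |x| < dM M h) :
    0 < root M h x := by
  have := gb_gt_one hM hh hx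
  apply Real.sqrt_pos.2
  nlinarith

lemma root_le (hM : 0 < M) (hh : 1 < h) {x : ℝ} (hx : |x| ≤ dM M h) :
    root M h x ≤ Real.sqrt (h^2 - 1) := by
  apply Real.sqrt_le_sqrt
  have h1 : gb M h x ≤ h := gb_le_h hM x
  have h2 : 0 ≤ gb M h x + 1 := by
    have h3 : x^2 ≤ (dM M h)^2 := by nlinarith [sq_abs x, abs_nonneg x]
    have := dM_sq' hM hh
    simp only [gb]; nlinarith
  nlinarith

/-- lower bound for the root on [0, dM): `root ≥ √(M·dM·(dM-x))`. -/
lemma root_lower (hM : 0 < M) (hh : 1 < h) {x : ℝ} (hx : x ∈ Ico 0 (dM M h)) :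
    Real.sqrt (M * dM M h * (dM M h - x)) ≤ root M h x := by
  apply Real.sqrt_le_sqrt
  have hd := dM_sq' hM hh
  have hdpos := dM_pos hM hh
  have h1 : gb M h x - 1 = M/2 * (dM M h - x) * (dM M h + x) := by
    simp only [gb]; nlinarith
  have h2 : M/2 * (dM M h - x) * (dM M h + x) ≥ M/2 * (dM M h - x) * dM M h := by
    have hge : 0 ≤ dM M h - x := by linarith [hx.2]
    nlinarith [mul_nonneg (mul_nonneg (by linarith : (0:ℝ) ≤ M/2) hge) hx.1]
  have h3 : 1 ≤ gb M h x := by nlinarith [hx.1, hx.2, sq_nonneg x]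
  nlinarith [hx.2, hx.1]

lemma cont_root : Continuous (fun x => root M h x) := by
  have hgb : Continuous (fun x => gb M h x) := by unfold gb; fun_prop
  exact Real.continuous_sqrt.comp ((hgb.pow 2).sub continuous_const)

lemma cont_on_Ico (hM : 0 < M) (hh : 1 < h) (g : ℝ → ℝ)
    (hg : g = gm M h ∨ g = gp M h ∨ g = gH M h) :
    ContinuousOn g (Ico 0 (dM M h)) := by
  have hroot : ∀ x ∈ Ico 0 (dM M h), root M h x ≠ 0 := by
    intro x hx
    have : |x| < dM M h := by rw [abs_of_nonneg hx.1]; exact hx.2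
    exact (root_pos hM hh this).ne'
  have hgbc : Continuous (fun x => gb M h x) := by simp only [gb]; fun_prop
  rcases hg with rfl | rfl | rfl
  · exact ((hgbc.sub cont_root).continuousOn).div cont_root.continuousOn hroot
  · exact ((hgbc.add cont_root).continuousOn).div cont_root.continuousOn hroot
  · exact (hgbc.continuousOn).div cont_root.continuousOn hroot

/-- uniform bound: all three integrands are ≤ C·(dM-x)^{-1/2} on [0,dM). -/
lemma integrand_bound (hM : 0 < M) (hh : 1 < h) (g : ℝ → ℝ)
    (hg : g = gm M h ∨ g = gp M h ∨ g = gH M h) :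
    ∀ x ∈ Ico 0 (dM M h), |g x| ≤
      (2*h / Real.sqrt (M * dM M h)) * ((dM M h - x) ^ (-(1/2) : ℝ)) := by
  intro x hx
  have hdpos := dM_pos hM hh
  have habs : |x| < dM M h := by rw [abs_of_nonneg hx.1]; exact hx.2
  have h1 := gb_gt_one hM hh habs
  have h2 := gb_le_h (h := h) hM x
  have hrpos := root_pos hM hh habs
  have hrle : root M h x ≤ Real.sqrt (h^2-1) := root_le hM hh habs.le
  have hsqrth : Real.sqrt (h^2-1) < h := (Real.sqrt_lt' (by linarith)).2 (by nlinarith)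
  -- numerator bound
  have hnum : ∀ n, (n = gb M h x - root M h x ∨ n = gb M h x + root M h x ∨ n = gb M h x)
      → |n| ≤ 2*h := by
    rintro n (rfl | rfl | rfl) <;> rw [abs_le] <;>
      constructor <;> nlinarith [Real.sqrt_nonneg ((gb M h x)^2 - 1)]
  -- the root lower bound
  have hlo := root_lower hM hh hx
  have hMdM : 0 < M * dM M h := by positivity
  have hdx : 0 ≤ dM M h - x := by linarith [hx.2]
  have hsplit : Real.sqrt (M * dM M h * (dM M h - x))
      = Real.sqrt (M * dM M h) * Real.sqrt (dM M h - x) := Real.sqrt_mul hMdM.le _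
  have hrw : ((dM M h - x) ^ (-(1/2) : ℝ)) = (Real.sqrt (dM M h - x))⁻¹ := by
    rw [Real.rpow_neg hdx, ← Real.sqrt_eq_rpow]
  rw [hrw]
  have h7 : 0 < Real.sqrt (dM M h - x) := Real.sqrt_pos.2 (by linarith [hx.2])
  have h8 : 0 < Real.sqrt (M * dM M h) := Real.sqrt_pos.2 hMdM
  have h9 : 0 < Real.sqrt (M * dM M h) * Real.sqrt (dM M h - x) := mul_pos h8 h7
  have hroot2 : Real.sqrt (M * dM M h) * Real.sqrt (dM M h - x) ≤ root M h x := by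
    rw [← hsplit]; exact hlo
  have key : ∀ n : ℝ, |n| ≤ 2*h →
      |n / root M h x| ≤ (2*h / Real.sqrt (M * dM M h)) * (Real.sqrt (dM M h - x))⁻¹ := by
    intro n hn
    rw [abs_div, abs_of_pos hrpos]
    calc |n| / root M h x ≤ (2*h) / (Real.sqrt (M * dM M h) * Real.sqrt (dM M h - x)) :=
          div_le_div₀ (by linarith) hn h9 hroot2
      _ = (2*h / Real.sqrt (M * dM M h)) * (Real.sqrt (dM M h - x))⁻¹ := by
          rw [← div_div, div_eq_mul_inv]
  rcases hg with rfl | rfl | rfl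
  · exact key _ (hnum _ (Or.inl rfl))
  · exact key _ (hnum _ (Or.inr (Or.inl rfl)))
  · exact key _ (hnum _ (Or.inr (Or.inr rfl)))

end integrands

end S13

namespace S13

open MeasureTheory intervalIntegral Filter Topology

section traj2

variable {M h : ℝ} {f : ℝ → ℝ × ℝ}

/-- γ(S) = gb(D) along the trajectory. -/
lemma gamma_gb (hinv : ∀ t, En M (f t) = h ∧ sLo h ≤ (f t).2 ∧ (f t).2 ≤ sHi h ∧ |(f t).1| ≤ dM M h)
    (ξ : ℝ) : ((f ξ).2^2+1)/(2*(f ξ).2) = gb M h ((f ξ).1) := by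
  have := (hinv ξ).1
  simp only [En] at this
  simp only [gb]
  linarith

lemma S_ne_one_at_zero (hM : 0 < M) (hh : 1 < h)
    (hinv : ∀ t, En M (f t) = h ∧ sLo h ≤ (f t).2 ∧ (f t).2 ≤ sHi h ∧ |(f t).1| ≤ dM M h)
    {z : ℝ} (hz : (f z).1 = 0) : (f z).2 = sLo h ∨ (f z).2 = sHi h := by
  have hγ := gamma_gb hinv z
  rw [hz] at hγ
  have : gb M h 0 = h := by simp [gb]
  rw [this] at hγ
  exact gamma_eq hh (lt_of_lt_of_le (sLo_pos hh) (hinv z).2.1) hγ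

/-- derivative of D is nonzero at a zero of D -/
lemma D'_ne_zero (hM : 0 < M) (hh : 1 < h)
    (hinv : ∀ t, En M (f t) = h ∧ sLo h ≤ (f t).2 ∧ (f t).2 ≤ sHi h ∧ |(f t).1| ≤ dM M h)
    {z : ℝ} (hz : (f z).1 = 0) : 1/(2*((f z).2)^2) - 1/2 ≠ 0 := by
  have hSpos : 0 < (f z).2 := lt_of_lt_of_le (sLo_pos hh) (hinv z).2.1
  rcases S_ne_one_at_zero hM hh hinv hz with hS | hS
  · have h1 : (f z).2 < 1 := hS ▸ sLo_lt_one hh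
    have : (1:ℝ)/2 < 1/(2*((f z).2)^2) := by
      apply div_lt_div_of_pos_left one_pos (by positivity)
      nlinarith
    linarith
  · have h1 : 1 < (f z).2 := hS ▸ one_lt_sHi hh
    have : 1/(2*((f z).2)^2) < (1:ℝ)/2 := by
      apply div_lt_div_of_pos_left one_pos (by norm_num)
      nlinarith
    linarith

/-- there is a next zero of `D` after any zero. -/
lemma next_zero (hM : 0 < M) (hh : 1 < h)
    (hf : ∀ t, HasDerivAt f (FF M h (f t)) t)
    (hinv : ∀ t, En M (f t) = h ∧ sLo h ≤ (f t).2 ∧ (f t).2 ≤ sHi h ∧ |(f t).1| ≤ dM M h)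
    {z : ℝ} (hz : (f z).1 = 0) :
    ∃ b, z < b ∧ (f b).1 = 0 ∧ ∀ t ∈ Ioo z b, (f t).1 ≠ 0 := by
  have hDc : Continuous (fun t => (f t).1) := by
    rw [continuous_iff_continuousAt]
    exact fun t => (compD hM hh hf hinv t).continuousAt
  have hder := compD hM hh hf hinv z
  have hslope := hasDerivAt_iff_tendsto_slope.1 hder
  have hev : ∀ᶠ y in 𝓝[≠] z, slope (fun t => (f t).1) z y ≠ 0 :=
    hslope.eventually_ne (D'_ne_zero hM hh hinv hz)
  rw [eventually_nhdsWithin_iff] at hev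
  rw [Metric.eventually_nhds_iff] at hev
  obtain ⟨ε, hε, hev⟩ := hev
  have hZne : {t | z < t ∧ (f t).1 = 0}.Nonempty := by
    obtain ⟨w, hw1, hw2⟩ := exists_zero_fwd hM hh hf hinv (z+1)
    exact ⟨w, by linarith, hw2⟩
  have hZbdd : BddBelow {t | z < t ∧ (f t).1 = 0} := ⟨z, fun t ht => ht.1.le⟩
  set b := sInf {t | z < t ∧ (f t).1 = 0} with hbdef
  have hZlb : ∀ t ∈ {t | z < t ∧ (f t).1 = 0}, z + ε ≤ t := by
    intro t ht
    by_contra hcon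
    push_neg at hcon
    have h1 : dist t z < ε := by
      rw [Real.dist_eq, abs_of_pos (by linarith [ht.1])]
      linarith
    have h2 := hev h1 (ne_of_gt ht.1)
    rw [slope_def_field, ht.2, hz] at h2
    simp at h2
  have hbz : z + ε ≤ b := le_csInf hZne hZlb
  have hbcl : b ∈ closure {t | z < t ∧ (f t).1 = 0} := csInf_mem_closure hZne hZbdd
  have hcl : closure {t | z < t ∧ (f t).1 = 0} ⊆ {t | z ≤ t ∧ (f t).1 = 0} := by
    apply closure_minimal
    · exact fun t ht => ⟨ht.1.le, ht.2⟩
    · exact IsClosed.inter (isClosed_le continuous_const continuous_id)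
        (isClosed_eq hDc continuous_const)
  refine ⟨b, by linarith, (hcl hbcl).2, ?_⟩
  intro t ht hcon
  have : t ∈ {t | z < t ∧ (f t).1 = 0} := ⟨ht.1, hcon⟩
  exact absurd (csInf_le hZbdd this) (not_le.2 ht.2)

/-- If S starts at the bottom of the level set, D is positive until the next zero. -/
lemma sign_pos (hM : 0 < M) (hh : 1 < h)
    (hf : ∀ t, HasDerivAt f (FF M h (f t)) t)
    (hinv : ∀ t, En M (f t) = h ∧ sLo h ≤ (f t).2 ∧ (f t).2 ≤ sHi h ∧ |(f t).1| ≤ dM M h)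
    {z b : ℝ} (hzb : z < b) (hz : (f z).1 = 0)
    (hnz : ∀ t ∈ Ioo z b, (f t).1 ≠ 0) (hpos : 0 < 1/(2*((f z).2)^2) - 1/2) :
    ∀ t ∈ Ioo z b, 0 < (f t).1 := by
  have hDc : Continuous (fun t => (f t).1) := by
    rw [continuous_iff_continuousAt]
    exact fun t => (compD hM hh hf hinv t).continuousAt
  have hder := compD hM hh hf hinv z
  have hslope := hasDerivAt_iff_tendsto_slope.1 hder
  have hev : ∀ᶠ y in 𝓝[≠] z, 0 < slope (fun t => (f t).1) z y :=
    hslope.eventually (eventually_gt_nhds hpos)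
  have hev' : ∀ᶠ y in 𝓝[>] z, 0 < slope (fun t => (f t).1) z y :=
    hev.filter_mono (nhdsWithin_mono z (fun y hy => ne_of_gt hy))
  intro t ht
  rcases lt_trichotomy ((f t).1) 0 with H | H | H
  · exfalso
    have hmem : Ioo z t ∈ 𝓝[>] z := Ioo_mem_nhdsGT_of_mem ⟨le_rfl, ht.1⟩
    obtain ⟨y, hy1, hy2⟩ := (hev'.and (eventually_of_mem hmem (fun y hy => hy))).exists
    have hDy : 0 < (f y).1 := by
      rw [slope_def_field, hz, sub_zero] at hy1
      have hyz : 0 < y - z := by linarith [hy2.1]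
      have := mul_pos hy1 hyz
      rwa [div_mul_cancel₀] at this
      exact ne_of_gt hyz
    have hyt : y ≤ t := hy2.2.le
    obtain ⟨x, hx, hx0⟩ := intermediate_value_Icc' hyt hDc.continuousOn ⟨H.le, hDy.le⟩
    exact hnz x ⟨lt_of_lt_of_le hy2.1 hx.1, lt_of_le_of_lt hx.2 ht.2⟩ hx0
  · exact absurd H (hnz t ht)
  · exact H

/-- Normalized pair of consecutive zeros: D vanishes at both ends, positive in between,
S goes from bottom to top. -/
lemma normalized_pair (hM : 0 < M) (hh : 1 < h)
    (hf : ∀ t, HasDerivAt f (FF M h (f t)) t)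
    (hinv : ∀ t, En M (f t) = h ∧ sLo h ≤ (f t).2 ∧ (f t).2 ≤ sHi h ∧ |(f t).1| ≤ dM M h) :
    ∃ a b, a < b ∧ (f a).1 = 0 ∧ (f b).1 = 0 ∧ (∀ ξ ∈ Ioo a b, 0 < (f ξ).1) ∧
      (f a).2 = sLo h ∧ (f b).2 = sHi h := by
  have hslo := sLo_pos hh
  have hSpos : ∀ t, 0 < (f t).2 := fun t => lt_of_lt_of_le hslo (hinv t).2.1
  have hSc : Continuous (fun t => (f t).2) := by
    rw [continuous_iff_continuousAt]
    exact fun t => (compS hM hh hf hinv t).continuousAt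
  obtain ⟨z, _, hz⟩ := exists_zero_fwd hM hh hf hinv 0
  obtain ⟨b, hzb, hb, hnz⟩ := next_zero hM hh hf hinv hz
  -- S at the endpoints
  have hSz := S_ne_one_at_zero hM hh hinv hz
  have hSb := S_ne_one_at_zero hM hh hinv hb
  rcases hSz with hSzlo | hSzhi
  · -- D > 0 on (z, b)
    have hD'pos : 0 < 1/(2*((f z).2)^2) - 1/2 := by
      rw [hSzlo]
      have h1 := sLo_lt_one hh
      have : (1:ℝ)/2 < 1/(2*(sLo h)^2) := by
        apply div_lt_div_of_pos_left one_pos (by positivity)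
        nlinarith
      linarith
    have hpos := sign_pos hM hh hf hinv hzb hz hnz hD'pos
    -- S is strictly increasing on [z, b]
    have hSmono : StrictMonoOn (fun t => (f t).2) (Icc z b) := by
      apply strictMonoOn_of_deriv_pos (convex_Icc z b) hSc.continuousOn
      intro x hx
      rw [interior_Icc] at hx
      rw [(compS hM hh hf hinv x).deriv]
      exact mul_pos hM (hpos x hx)
    have hSblt : (f z).2 < (f b).2 := hSmono ⟨le_rfl, hzb.le⟩ ⟨hzb.le, le_rfl⟩ hzb
    have hSbhi : (f b).2 = sHi h := by
      rcases hSb with H | H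
      · exfalso; rw [hSzlo, H] at hSblt; exact lt_irrefl _ hSblt
      · exact H
    exact ⟨z, b, hzb, hz, hb, hpos, hSzlo, hSbhi⟩
  · -- D < 0 on (z, b); use reflection
    have hD'neg : 1/(2*((f z).2)^2) - 1/2 < 0 := by
      rw [hSzhi]
      have h1 := one_lt_sHi hh
      have : 1/(2*(sHi h)^2) < (1:ℝ)/2 := by
        apply div_lt_div_of_pos_left one_pos (by norm_num)
        nlinarith
      linarith
    -- use the reflected trajectory to get positivity
    have hrefl := reflect hM hh hf hz
    have hneg : ∀ t ∈ Ioo z b, (f t).1 < 0 := by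
      -- mirrored sign argument: apply sign_pos to g := reflected solution? instead direct:
      intro t ht
      rcases lt_trichotomy ((f t).1) 0 with H | H | H
      · exact H
      · exact absurd H (hnz t ht)
      · exfalso
        have hder := compD hM hh hf hinv z
        have hslope := hasDerivAt_iff_tendsto_slope.1 hder
        have hev : ∀ᶠ y in 𝓝[≠] z, slope (fun t => (f t).1) z y < 0 :=
          hslope.eventually (eventually_lt_nhds hD'neg)
        have hev' : ∀ᶠ y in 𝓝[>] z, slope (fun t => (f t).1) z y < 0 :=
          hev.filter_mono (nhdsWithin_mono z (fun y hy => ne_of_gt hy))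
        have hmem : Ioo z t ∈ 𝓝[>] z := Ioo_mem_nhdsGT_of_mem ⟨le_rfl, ht.1⟩
        obtain ⟨y, hy1, hy2⟩ := (hev'.and (eventually_of_mem hmem (fun y hy => hy))).exists
        have hDc : Continuous (fun t => (f t).1) := by
          rw [continuous_iff_continuousAt]
          exact fun t => (compD hM hh hf hinv t).continuousAt
        have hDy : (f y).1 < 0 := by
          rw [slope_def_field, hz, sub_zero] at hy1
          have hyz : 0 < y - z := by linarith [hy2.1]
          have := mul_neg_of_neg_of_pos hy1 hyz
          rwa [div_mul_cancel₀] at this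
          exact ne_of_gt hyz
        obtain ⟨x, hx, hx0⟩ := intermediate_value_Icc hy2.2.le hDc.continuousOn ⟨hDy.le, H.le⟩
        exact hnz x ⟨lt_of_lt_of_le hy2.1 hx.1, lt_of_le_of_lt hx.2 ht.2⟩ hx0
    -- S strictly decreasing, so S b = sLo
    have hSanti : StrictAntiOn (fun t => (f t).2) (Icc z b) := by
      apply strictAntiOn_of_deriv_neg (convex_Icc z b) hSc.continuousOn
      intro x hx
      rw [interior_Icc] at hx
      rw [(compS hM hh hf hinv x).deriv]
      exact mul_neg_of_pos_of_neg hM (hneg x hx)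
    have hSblt : (f b).2 < (f z).2 := hSanti ⟨le_rfl, hzb.le⟩ ⟨hzb.le, le_rfl⟩ hzb
    have hSblo : (f b).2 = sLo h := by
      rcases hSb with H | H
      · exact H
      · exfalso; rw [hSzhi, H] at hSblt; exact lt_irrefl _ hSblt
    -- reflected pair (2z - b, z)
    refine ⟨2*z - b, z, by linarith, ?_, hz, ?_, ?_, hSzhi⟩
    · have := hrefl b
      rw [this, hb]; simp
    · intro ξ hξ
      have hη : 2*z - ξ ∈ Ioo z b := ⟨by linarith [hξ.2], by linarith [hξ.1]⟩
      have := hrefl (2*z - ξ)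
      have e : 2*z - (2*z - ξ) = ξ := by ring
      rw [e] at this
      rw [this]
      simpa using hneg _ hη
    · have := hrefl b
      rw [this]
      simpa using hSblo

end traj2

end S13

namespace S13

open MeasureTheory intervalIntegral Filter Topology

variable {M h : ℝ} {f : ℝ → ℝ × ℝ}

set_option maxHeartbeats 2000000 in
lemma half_period (hM : 0 < M) (hh : 1 < h)
    (hf : ∀ t, HasDerivAt f (FF M h (f t)) t)
    (hinv : ∀ t, En M (f t) = h ∧ sLo h ≤ (f t).2 ∧ (f t).2 ≤ sHi h ∧ |(f t).1| ≤ dM M h)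
    {a b : ℝ} (hab : a < b)
    (hDa : (f a).1 = 0) (hDb : (f b).1 = 0) (hpos : ∀ ξ ∈ Ioo a b, 0 < (f ξ).1)
    (hSa : (f a).2 = sLo h) (hSb : (f b).2 = sHi h) :
    b - a = 2 * ∫ x in (0:ℝ)..(dM M h), gH M h x := by
  have hslo := sLo_pos hh
  have hdpos := dM_pos hM hh
  have hSpos : ∀ t, 0 < (f t).2 := fun t => lt_of_lt_of_le hslo (hinv t).2.1
  have hDc : Continuous (fun t => (f t).1) := by
    rw [continuous_iff_continuousAt]
    exact fun t => (compD hM hh hf hinv t).continuousAt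
  have hSc : Continuous (fun t => (f t).2) := by
    rw [continuous_iff_continuousAt]
    exact fun t => (compS hM hh hf hinv t).continuousAt
  have hD'c : Continuous (fun ξ => 1/(2*((f ξ).2)^2) - 1/2) := by
    apply Continuous.sub _ continuous_const
    apply Continuous.div continuous_const (continuous_const.mul (hSc.pow 2))
    intro t
    have := hSpos t
    show (2:ℝ) * ((f t).2)^2 ≠ 0
    positivity
  -- S strictly increasing on [a, b]
  have hSmono : StrictMonoOn (fun t => (f t).2) (Icc a b) := by
    apply strictMonoOn_of_deriv_pos (convex_Icc a b) hSc.continuousOn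
    intro x hx
    rw [interior_Icc] at hx
    rw [(compS hM hh hf hinv x).deriv]
    exact mul_pos hM (hpos x hx)
  -- midpoint where S = 1
  have hone : (1:ℝ) ∈ Icc ((f a).2) ((f b).2) := by
    rw [hSa, hSb]; exact ⟨(sLo_lt_one hh).le, (one_lt_sHi hh).le⟩
  obtain ⟨m, hm, hSm'⟩ := intermediate_value_Icc hab.le hSc.continuousOn hone
  have hSm : (f m).2 = 1 := hSm'
  have ham : a < m := by
    rcases lt_or_eq_of_le hm.1 with H | H
    · exact H
    · exfalso; rw [← H, hSa] at hSm; exact absurd hSm (ne_of_lt (sLo_lt_one hh))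
  have hmb : m < b := by
    rcases lt_or_eq_of_le hm.2 with H | H
    · exact H
    · exfalso; rw [H, hSb] at hSm; exact absurd hSm (ne_of_gt (one_lt_sHi hh))
  have hSlt : ∀ ξ ∈ Ico a m, (f ξ).2 < 1 := by
    intro ξ hξ
    have h7 : (f ξ).2 < (f m).2 :=
      hSmono ⟨hξ.1, le_trans hξ.2.le hmb.le⟩ ⟨ham.le, hmb.le⟩ hξ.2
    rwa [hSm] at h7
  have hSgt : ∀ ξ ∈ Ioc m b, 1 < (f ξ).2 := by
    intro ξ hξ
    have h7 : (f m).2 < (f ξ).2 :=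
      hSmono ⟨ham.le, hmb.le⟩ ⟨le_trans ham.le hξ.1.le, hξ.2⟩ hξ.1
    rwa [hSm] at h7
  -- value of D at midpoint
  have hDm : (f m).1 = dM M h := by
    have hγ := gamma_gb hinv m
    rw [hSm] at hγ
    have h1 : gb M h ((f m).1) = 1 := by rw [← hγ]; norm_num
    have h2 : ((f m).1)^2 = (dM M h)^2 := by
      have := dM_sq' hM hh
      simp only [gb] at h1
      nlinarith
    have h3 : 0 < (f m).1 := hpos m ⟨ham, hmb⟩
    nlinarith
  -- monotonicity of D on the two halves
  have hDmono : StrictMonoOn (fun t => (f t).1) (Icc a m) := by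
    apply strictMonoOn_of_deriv_pos (convex_Icc a m) hDc.continuousOn
    intro x hx
    rw [interior_Icc] at hx
    rw [(compD hM hh hf hinv x).deriv]
    have h1 := hSlt x ⟨hx.1.le, hx.2⟩
    have h2 := hSpos x
    have : (1:ℝ)/2 < 1/(2*((f x).2)^2) := by
      apply div_lt_div_of_pos_left one_pos (by positivity)
      nlinarith
    linarith
  have hDanti : StrictAntiOn (fun t => (f t).1) (Icc m b) := by
    apply strictAntiOn_of_deriv_neg (convex_Icc m b) hDc.continuousOn
    intro x hx
    rw [interior_Icc] at hx
    rw [(compD hM hh hf hinv x).deriv]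
    have h1 := hSgt x ⟨hx.1, hx.2.le⟩
    have h2 := hSpos x
    have : 1/(2*((f x).2)^2) < (1:ℝ)/2 := by
      apply div_lt_div_of_pos_left one_pos (by norm_num)
      nlinarith
    linarith
  -- integrability
  have hIm : IntervalIntegrable (gm M h) volume 0 (dM M h) :=
    integrable_of_sqrt_bound hdpos (cont_on_Ico hM hh _ (Or.inl rfl))
      (integrand_bound hM hh _ (Or.inl rfl))
  have hIp : IntervalIntegrable (gp M h) volume 0 (dM M h) :=
    integrable_of_sqrt_bound hdpos (cont_on_Ico hM hh _ (Or.inr (Or.inl rfl)))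
      (integrand_bound hM hh _ (Or.inr (Or.inl rfl)))
  -- first half
  have hfirst : ∫ x in (0:ℝ)..(dM M h), gm M h x = m - a := by
    have happ := time_eq_integral (D := fun ξ => (f ξ).1)
      (D' := fun ξ => 1/(2*((f ξ).2)^2) - 1/2) (g := gm M h) ham
      hDc.continuousOn hDmono
      (fun ξ _ => compD hM hh hf hinv ξ) hD'c.continuousOn
      ?_ ?_ ?_
    · beta_reduce at happ
      rw [hDa, hDm] at happ
      exact happ
    · -- the identity
      intro ξ hξ
      have hS1 : (f ξ).2 < 1 := hSlt ξ hξ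
      have hS0 : 0 < (f ξ).2 := hSpos ξ
      have hγ := gamma_gb hinv ξ
      have hsq : (gb M h ((f ξ).1))^2 - 1 = ((1 - ((f ξ).2)^2)/(2*(f ξ).2))^2 := by
        rw [← hγ]; field_simp; ring
      have hroot : root M h ((f ξ).1) = (1 - ((f ξ).2)^2)/(2*(f ξ).2) := by
        rw [root, hsq, Real.sqrt_sq (div_nonneg (by nlinarith) (by linarith))]
      show (1/(2*((f ξ).2)^2) - 1/2) * gm M h ((f ξ).1) = 1
      rw [gm, hroot, ← hγ]
      have h1 : 1 - ((f ξ).2)^2 ≠ 0 := by nlinarith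
      field_simp
      ring
    · show ContinuousOn (gm M h) (Ico ((f a).1) ((f m).1))
      rw [show (f a).1 = 0 from hDa, show (f m).1 = dM M h from hDm]
      exact cont_on_Ico hM hh _ (Or.inl rfl)
    · show IntervalIntegrable (gm M h) volume ((f a).1) ((f m).1)
      rw [show (f a).1 = 0 from hDa, show (f m).1 = dM M h from hDm]
      exact hIm
  -- second half (reversed)
  have hsecond : ∫ x in (0:ℝ)..(dM M h), gp M h x = b - m := by
    have happ := time_eq_integral (D := fun ξ => (f (m + b - ξ)).1)
      (D' := fun ξ => -(1/(2*((f (m + b - ξ)).2)^2) - 1/2)) (g := gp M h) hmb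
      ?_ ?_ ?_ ?_ ?_ ?_ ?_
    · beta_reduce at happ
      rw [show m + b - m = b by ring, show m + b - b = m by ring, hDb, hDm] at happ
      exact happ
    · -- continuity
      exact hDc.comp_continuousOn
        ((continuous_const.sub continuous_id).continuousOn)
    · -- strict monotonicity
      intro x hx y hy hxy
      have hx' : m + b - x ∈ Icc m b := ⟨by linarith [hx.2], by linarith [hx.1]⟩
      have hy' : m + b - y ∈ Icc m b := ⟨by linarith [hy.2], by linarith [hy.1]⟩
      exact hDanti hy' hx' (by linarith)
    · -- derivative
      intro ξ _
      have haff : HasDerivAt (fun x : ℝ => m + b - x) (-1) ξ := by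
        have := (hasDerivAt_const ξ (m+b)).sub (hasDerivAt_id ξ); rw [zero_sub] at this; exact this
      have := HasDerivAt.scomp ξ (compD hM hh hf hinv (m + b - ξ)) haff
      simpa [Function.comp_def] using this
    · -- continuity of D'
      apply ContinuousOn.neg
      exact hD'c.comp_continuousOn
        ((continuous_const.sub continuous_id).continuousOn)
    · -- the identity
      intro ξ hξ
      set η := m + b - ξ with hηdef
      have hη : η ∈ Ioc m b := ⟨by simp only [hηdef]; linarith [hξ.2], by simp only [hηdef]; linarith [hξ.1]⟩
      have hS1 : 1 < (f η).2 := hSgt η hη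
      have hS0 : 0 < (f η).2 := hSpos η
      have hγ := gamma_gb hinv η
      have hsq : (gb M h ((f η).1))^2 - 1 = ((((f η).2)^2 - 1)/(2*(f η).2))^2 := by
        rw [← hγ]; field_simp; ring
      have hroot : root M h ((f η).1) = (((f η).2)^2 - 1)/(2*(f η).2) := by
        rw [root, hsq, Real.sqrt_sq (div_nonneg (by nlinarith) (by linarith))]
      show -(1/(2*((f η).2)^2) - 1/2) * gp M h ((f η).1) = 1
      rw [gp, hroot, ← hγ]
      have h1 : ((f η).2)^2 - 1 ≠ 0 := by nlinarith
      field_simp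
      ring
    · show ContinuousOn (gp M h) (Ico ((f (m + b - m)).1) ((f (m + b - b)).1))
      rw [show m + b - m = b by ring, show m + b - b = m by ring, hDb, hDm]
      exact cont_on_Ico hM hh _ (Or.inr (Or.inl rfl))
    · show IntervalIntegrable (gp M h) volume ((f (m + b - m)).1) ((f (m + b - b)).1)
      rw [show m + b - m = b by ring, show m + b - b = m by ring, hDb, hDm]
      exact hIp
  -- combine
  have hsum : ∫ x in (0:ℝ)..(dM M h), (gm M h x + gp M h x) = (m - a) + (b - m) := by
    rw [integral_add hIm hIp, hfirst, hsecond]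
  have h2gH : ∫ x in (0:ℝ)..(dM M h), (gm M h x + gp M h x)
      = 2 * ∫ x in (0:ℝ)..(dM M h), gH M h x := by
    rw [← intervalIntegral.integral_const_mul]
    apply integral_congr
    intro x _
    exact gm_add_gp x
  rw [h2gH] at hsum
  linarith

end S13

namespace S13

open MeasureTheory intervalIntegral Filter Topology

variable {M h : ℝ}

lemma gH_int_even (hM : 0 < M) (hh : 1 < h) :
    ∫ x in (-(dM M h))..(dM M h), gH M h x = 2 * ∫ x in (0:ℝ)..(dM M h), gH M h x := by
  have hIH : IntervalIntegrable (gH M h) volume 0 (dM M h) :=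
    integrable_of_sqrt_bound (dM_pos hM hh) (cont_on_Ico hM hh _ (Or.inr (Or.inr rfl)))
      (integrand_bound hM hh _ (Or.inr (Or.inr rfl)))
  have heven : (fun x => gH M h (-x)) = gH M h := by
    funext x; simp only [gH, gb, root, neg_sq]
  have hI2 : IntervalIntegrable (gH M h) volume (-(dM M h)) 0 := by
    have h1 := hIH.comp_sub_left 0
    rw [show (0:ℝ) - 0 = 0 by ring, show (0:ℝ) - dM M h = -(dM M h) by ring] at h1
    have h2 : (fun x => gH M h (0 - x)) = gH M h := by
      funext x; rw [zero_sub]; exact congrFun heven x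
    rw [h2] at h1
    exact h1.symm
  have hneg : ∫ x in (-(dM M h))..(0:ℝ), gH M h x = ∫ x in (0:ℝ)..(dM M h), gH M h x := by
    have h3 := integral_comp_neg (a := (0:ℝ)) (b := dM M h) (gH M h)
    rw [heven, neg_zero] at h3
    exact h3.symm
  have hadd := integral_add_adjacent_intervals hI2 hIH
  rw [← hadd, hneg]; ring

end S13

/-- For the autonomous system `Δ' = 1/(2s²) - 1/2`, `s' = MΔ` on `{s > 0}` with
energy `h = (s²+1)/(2s) + MΔ²/2 > 1`, any solution extends to a global solution
on `ℝ` which is periodic with period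
`ξ_H = 2∫_{-Δ_M}^{Δ_M} γ̆/√(γ̆²-1) dΔ`, `γ̆(Δ) = h - MΔ²/2`, `Δ_M = √(2(h-1)/M)`. -/
theorem stmt_13 (M : ℝ) (hM : 0 < M) (J : Set ℝ) (hJopen : IsOpen J)
    (hJconn : J.OrdConnected) (ξ₁ : ℝ) (hξ₁ : ξ₁ ∈ J) (Δ s : ℝ → ℝ)
    (hsol : ∀ ξ ∈ J, HasDerivAt Δ (1 / (2 * (s ξ) ^ 2) - 1 / 2) ξ ∧
      HasDerivAt s (M * Δ ξ) ξ ∧ 0 < s ξ)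
    (h : ℝ) (hdef : h = ((s ξ₁) ^ 2 + 1) / (2 * s ξ₁) + M * (Δ ξ₁) ^ 2 / 2)
    (hh : 1 < h)
    (ξH : ℝ) (hξH : ξH = 2 * ∫ x in (-(Real.sqrt (2 * (h - 1) / M)))..(Real.sqrt (2 * (h - 1) / M)),
      (h - M * x ^ 2 / 2) / Real.sqrt ((h - M * x ^ 2 / 2) ^ 2 - 1)) :
    ∃ D S : ℝ → ℝ,
      (∀ ξ : ℝ, HasDerivAt D (1 / (2 * (S ξ) ^ 2) - 1 / 2) ξ ∧
        HasDerivAt S (M * D ξ) ξ ∧ 0 < S ξ) ∧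
      (∀ ξ ∈ J, D ξ = Δ ξ ∧ S ξ = s ξ) ∧
      Function.Periodic D ξH ∧ Function.Periodic S ξH := by
  classical
  have hslo := S13.sLo_pos hh
  have hcpos : (0:ℝ) < S13.sLo h / 2 := by linarith
  have hd0 : (0:ℝ) ≤ S13.dM M h + 1 := by
    linarith [le_of_lt (S13.dM_pos hM hh)]
  have hs1pos : 0 < s ξ₁ := (hsol ξ₁ hξ₁).2.2
  have hE0 : S13.En M (Δ ξ₁, s ξ₁) = h := by
    simp only [S13.En]; exact hdef.symm
  -- lipschitz & bound for the modified field
  have hlip : LipschitzWith _ (S13.FF M h) := S13.vf_lipschitz (c := S13.sLo h / 2)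
    (d := S13.dM M h + 1) hM hcpos
  have hbdd : ∀ p, ‖S13.FF M h p‖ ≤
      max (1/(2*(S13.sLo h / 2)^2) + 1/2) (M*(S13.dM M h + 1)) :=
    fun p => S13.vf_bound hM hcpos hd0 p
  -- global solution through the initial point
  obtain ⟨f, hf0, hf⟩ := S13.glob_exists hlip hbdd ξ₁ (Δ ξ₁, s ξ₁)
  have hinv := S13.invariant hM hh hf (t₀ := ξ₁) (by rw [hf0]; exact hE0)
    (by rw [hf0]; exact hs1pos)
  -- energy conservation of the given solution on J
  have hconsJ : ∀ ξ ∈ J, S13.En M (Δ ξ, s ξ) = h := by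
    intro ξ hξ
    have hder : ∀ t ∈ J, HasDerivAt (fun u => (s u^2+1)/(2*s u) + M*(Δ u)^2/2) 0 t := by
      intro t ht
      exact S13.energy_deriv (ne_of_gt (hsol t ht).2.2) (hsol t ht).1 (hsol t ht).2.1
    have hgoal : (s ξ^2+1)/(2*s ξ) + M*(Δ ξ)^2/2 = (s ξ₁^2+1)/(2*s ξ₁) + M*(Δ ξ₁)^2/2 := by
      rcases le_total ξ₁ ξ with H | H
      · have hIcc : Icc ξ₁ ξ ⊆ J := hJconn.out hξ₁ hξ
        exact constant_of_has_deriv_right_zero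
          (fun x hx => (hder x (hIcc hx)).continuousAt.continuousWithinAt)
          (fun x hx => (hder x (hIcc (Ico_subset_Icc_self hx))).hasDerivWithinAt)
          ξ ⟨H, le_rfl⟩
      · have hIcc : Icc ξ ξ₁ ⊆ J := hJconn.out hξ hξ₁
        exact (constant_of_has_deriv_right_zero
          (fun x hx => (hder x (hIcc hx)).continuousAt.continuousWithinAt)
          (fun x hx => (hder x (hIcc (Ico_subset_Icc_self hx))).hasDerivWithinAt)
          ξ₁ ⟨H, le_rfl⟩).symm
    simp only [S13.En]
    rw [hgoal]
    exact hdef.symm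
  -- agreement of f with (Δ, s) on J
  have hagree : ∀ ξ ∈ J, f ξ = (Δ ξ, s ξ) := by
    intro ξ hξ
    obtain ⟨ε₁, hε₁, hball₁⟩ := Metric.isOpen_iff.1 hJopen ξ₁ hξ₁
    obtain ⟨ε₂, hε₂, hball₂⟩ := Metric.isOpen_iff.1 hJopen ξ hξ
    set ε := min ε₁ ε₂ with hεdef
    have hεpos : 0 < ε := lt_min hε₁ hε₂
    have hIoo : Ioo (min ξ₁ ξ - ε/2) (max ξ₁ ξ + ε/2) ⊆ J := by
      intro y hy
      by_cases hy1 : y < min ξ₁ ξ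
      · rcases min_cases ξ₁ ξ with ⟨He, _⟩ | ⟨He, _⟩
        · apply hball₁
          rw [He] at hy1 hy
          rw [Metric.mem_ball, Real.dist_eq, abs_of_neg (by linarith)]
          have h10 : ε ≤ ε₁ := min_le_left _ _
          linarith [hy.1]
        · apply hball₂
          rw [He] at hy1 hy
          rw [Metric.mem_ball, Real.dist_eq, abs_of_neg (by linarith)]
          have h10 : ε ≤ ε₂ := min_le_right _ _
          linarith [hy.1]
      · by_cases hy2 : max ξ₁ ξ < y
        · rcases max_cases ξ₁ ξ with ⟨He, _⟩ | ⟨He, _⟩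
          · apply hball₁
            rw [He] at hy2 hy
            rw [Metric.mem_ball, Real.dist_eq, abs_of_pos (by linarith)]
            have h10 : ε ≤ ε₁ := min_le_left _ _
            linarith [hy.2]
          · apply hball₂
            rw [He] at hy2 hy
            rw [Metric.mem_ball, Real.dist_eq, abs_of_pos (by linarith)]
            have h10 : ε ≤ ε₂ := min_le_right _ _
            linarith [hy.2]
        · exact hJconn.uIcc_subset hξ₁ hξ ⟨not_lt.1 hy1, not_lt.1 hy2⟩
    have hmem₁ : ξ₁ ∈ Ioo (min ξ₁ ξ - ε/2) (max ξ₁ ξ + ε/2) :=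
      ⟨by linarith [min_le_left ξ₁ ξ], by linarith [le_max_left ξ₁ ξ]⟩
    have hmemξ : ξ ∈ Ioo (min ξ₁ ξ - ε/2) (max ξ₁ ξ + ε/2) :=
      ⟨by linarith [min_le_right ξ₁ ξ], by linarith [le_max_right ξ₁ ξ]⟩
    have hODEg : ∀ t ∈ Ioo (min ξ₁ ξ - ε/2) (max ξ₁ ξ + ε/2),
        HasDerivAt (fun u => (Δ u, s u)) (S13.FF M h (Δ t, s t)) t := by
      intro t ht
      have tJ := hIoo ht
      have hp : HasDerivAt (fun u => (Δ u, s u)) (1/(2*(s t)^2) - 1/2, M * Δ t) t := by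
        have := ((hsol t tJ).1).prodMk ((hsol t tJ).2.1)
        convert this using 2 <;> norm_num
      have hb := S13.level_bounds hM hh (show 0 < (Δ t, s t).2 from (hsol t tJ).2.2)
        (hconsJ t tJ)
      rw [S13.FF_eq hM hh hb.1 hb.2.2]
      exact hp
    have := ODE_solution_unique_of_mem_Ioo (v := fun _ p => S13.FF M h p)
      (s := fun _ => Set.univ) (fun _ _ => hlip.lipschitzOnWith (s := Set.univ)) hmem₁
      (fun t _ => ⟨hf t, Set.mem_univ _⟩)
      (fun t ht => ⟨hODEg t ht, Set.mem_univ _⟩) hf0 hmemξ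
    exact this
  -- normalized pair of zeros and the period identity
  obtain ⟨a, b, hab, hDa, hDb, hpos, hSa, hSb⟩ := S13.normalized_pair hM hh hf hinv
  have hhp := S13.half_period hM hh hf hinv hab hDa hDb hpos hSa hSb
  have hper := S13.periodic_of_two_zeros hM hh hf hDa hDb
  have hgHe : ∀ x : ℝ, (h - M * x ^ 2 / 2) / Real.sqrt ((h - M * x ^ 2 / 2) ^ 2 - 1)
      = S13.gH M h x := fun x => rfl
  have hξHeq : ξH = 2 * (b - a) := by
    rw [hξH]
    simp only [hgHe]
    rw [show Real.sqrt (2 * (h - 1) / M) = S13.dM M h from rfl]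
    rw [S13.gH_int_even hM hh]
    linarith [hhp]
  have hperξH : ∀ t, f (t + ξH) = f t := by
    intro t
    rw [hξHeq]
    exact hper t
  refine ⟨fun ξ => (f ξ).1, fun ξ => (f ξ).2, ?_, ?_, ?_, ?_⟩
  · intro ξ
    exact ⟨S13.compD hM hh hf hinv ξ, S13.compS hM hh hf hinv ξ,
      lt_of_lt_of_le hslo (hinv ξ).2.1⟩
  · intro ξ hξ
    constructor
    · exact congrArg Prod.fst (hagree ξ hξ)
    · exact congrArg Prod.snd (hagree ξ hξ)
  · intro t
    exact congrArg Prod.fst (hperξH t)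
  · intro t
    exact congrArg Prod.snd (hperξH t)
end

section
/- Let M > 0 and h > 1. Set a := √(2(h − 1)/M), γ̆(x) := h − M x²/2, and α := √((h − 1)/(h + 1)). Then 2 ∫_{−a}^{a} γ̆(x)/√(γ̆(x)² − 1) dx = 8 √((h + 1)/(2M)) [E(α) − K(α)/(h + 1)], where K(α) = ∫₀^{π/2} dθ/√(1 − α² sin²θ) and E(α) = ∫₀^{π/2} √(1 − α² sin²θ) dθ are the complete elliptic integrals of the first and second kind. -/
open Real MeasureTheory Set intervalIntegral

/-- Closed form of the relativistic plasma oscillation period via complete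
elliptic integrals: with `a = √(2(h-1)/M)`, `γ̆(x) = h - Mx²/2`,
`α = √((h-1)/(h+1))`,
`2∫_{-a}^{a} γ̆/√(γ̆²-1) = 8√((h+1)/(2M)) [E(α) - K(α)/(h+1)]`. -/
theorem stmt_14 (M h : ℝ) (hM : 0 < M) (hh : 1 < h) :
    2 * (∫ x in (-(Real.sqrt (2 * (h - 1) / M)))..(Real.sqrt (2 * (h - 1) / M)),
        (h - M * x ^ 2 / 2) / Real.sqrt ((h - M * x ^ 2 / 2) ^ 2 - 1))
      = 8 * Real.sqrt ((h + 1) / (2 * M)) *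
        ((∫ θ in (0:ℝ)..(Real.pi / 2),
            Real.sqrt (1 - (Real.sqrt ((h - 1) / (h + 1))) ^ 2 * Real.sin θ ^ 2))
          - (∫ θ in (0:ℝ)..(Real.pi / 2),
              1 / Real.sqrt (1 - (Real.sqrt ((h - 1) / (h + 1))) ^ 2 * Real.sin θ ^ 2))
            / (h + 1)) := by
  have hh1 : (0:ℝ) < h - 1 := by linarith
  have hh2 : (0:ℝ) < h + 1 := by linarith
  set a := Real.sqrt (2 * (h - 1) / M) with ha_def
  set k := (h - 1) / (h + 1) with hk_def
  have hk0 : 0 ≤ k := by positivity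
  have hk1 : k < 1 := by
    rw [hk_def, div_lt_one hh2]; linarith
  have hsqk : (Real.sqrt k) ^ 2 = k := Real.sq_sqrt hk0
  have ha2 : a ^ 2 = 2 * (h - 1) / M := Real.sq_sqrt (by positivity)
  have ha_pos : 0 < a := Real.sqrt_pos.mpr (by positivity)
  -- u θ > 0 everywhere
  have hu_pos : ∀ θ : ℝ, 0 < 1 - k * Real.sin θ ^ 2 := by
    intro θ
    nlinarith [Real.sin_sq_le_one θ, sq_nonneg (Real.sin θ)]
  set g : ℝ → ℝ := fun x => (h - M * x ^ 2 / 2) / Real.sqrt ((h - M * x ^ 2 / 2) ^ 2 - 1)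
    with hg_def
  set F : ℝ → ℝ := fun θ =>
    (h + 1) * Real.sqrt (1 - k * Real.sin θ ^ 2) - 1 / Real.sqrt (1 - k * Real.sin θ ^ 2)
    with hF_def
  set C := a / (Real.sqrt (h - 1) * Real.sqrt (h + 1)) with hC_def
  -- image of the sine map
  have himg : (fun θ => a * Real.sin θ) '' Ioo (-(π/2)) (π/2) = Ioo (-a) a := by
    ext x
    constructor
    · rintro ⟨θ, hθ, rfl⟩
      have hmemθ : θ ∈ Icc (-(π/2)) (π/2) := ⟨hθ.1.le, hθ.2.le⟩
      have hmem1 : (π/2 : ℝ) ∈ Icc (-(π/2)) (π/2) := ⟨by linarith [Real.pi_pos], le_rfl⟩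
      have hmem2 : (-(π/2) : ℝ) ∈ Icc (-(π/2)) (π/2) := ⟨le_rfl, by linarith [Real.pi_pos]⟩
      have h1 : Real.sin θ < 1 := by
        have := Real.strictMonoOn_sin hmemθ hmem1 hθ.2
        rwa [Real.sin_pi_div_two] at this
      have h2 : -1 < Real.sin θ := by
        have := Real.strictMonoOn_sin hmem2 hmemθ hθ.1
        rwa [Real.sin_neg, Real.sin_pi_div_two] at this
      refine ⟨?_, ?_⟩
      · show -a < a * Real.sin θ; nlinarith
      · show a * Real.sin θ < a; nlinarith
    · rintro ⟨hx1, hx2⟩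
      refine ⟨Real.arcsin (x / a), ⟨?_, ?_⟩, ?_⟩
      · exact Real.neg_pi_div_two_lt_arcsin.mpr (by rw [neg_lt, ← neg_div]; exact (div_lt_one ha_pos).mpr (by linarith))
      · exact Real.arcsin_lt_pi_div_two.mpr ((div_lt_one ha_pos).mpr hx2)
      · show a * Real.sin (Real.arcsin (x / a)) = x
        rw [Real.sin_arcsin (by rw [le_div_iff₀ ha_pos]; linarith) (by rw [div_le_one ha_pos]; linarith)]
        field_simp
  -- substitution
  have hderiv : ∀ θ ∈ Ioo (-(π/2)) (π/2),
      HasDerivWithinAt (fun θ => a * Real.sin θ) (a * Real.cos θ) (Ioo (-(π/2)) (π/2)) θ :=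
    fun θ _ => ((Real.hasDerivAt_sin θ).const_mul a).hasDerivWithinAt
  have hinj : InjOn (fun θ => a * Real.sin θ) (Ioo (-(π/2)) (π/2)) := by
    intro x hx y hy hxy
    have : Real.sin x = Real.sin y := by
      exact mul_left_cancel₀ (ne_of_gt ha_pos) hxy
    exact Real.injOn_sin ⟨le_of_lt hx.1, le_of_lt hx.2⟩ ⟨le_of_lt hy.1, le_of_lt hy.2⟩ this
  have hsub := MeasureTheory.integral_image_eq_integral_abs_deriv_smul measurableSet_Ioo
      hderiv hinj g
  rw [himg] at hsub
  -- pointwise simplification on Ioo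
  have hpt : ∀ θ ∈ Ioo (-(π/2)) (π/2),
      |a * Real.cos θ| • g (a * Real.sin θ) = C * F θ := by
    intro θ hθ
    have hc : 0 < Real.cos θ := Real.cos_pos_of_mem_Ioo hθ
    set s := Real.sin θ
    set u := 1 - k * s ^ 2 with hu_def
    have hu : 0 < u := hu_pos θ
    have hss : s ^ 2 + Real.cos θ ^ 2 = 1 := by
      rw [← Real.sin_sq_add_cos_sq θ]
    have hgam : h - M * (a * s) ^ 2 / 2 = h - (h - 1) * s ^ 2 := by
      have : (a * s) ^ 2 = a ^ 2 * s ^ 2 := by ring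
      rw [this, ha2]; field_simp
    have hfac : (h - (h - 1) * s ^ 2) ^ 2 - 1
        = ((Real.sqrt (h-1) * Real.sqrt (h+1) * Real.cos θ * Real.sqrt u)) ^ 2 := by
      have e1 : Real.sqrt (h-1) ^ 2 = h - 1 := Real.sq_sqrt hh1.le
      have e2 : Real.sqrt (h+1) ^ 2 = h + 1 := Real.sq_sqrt hh2.le
      have e3 : Real.sqrt u ^ 2 = u := Real.sq_sqrt hu.le
      have expand : (Real.sqrt (h-1) * Real.sqrt (h+1) * Real.cos θ * Real.sqrt u) ^ 2
          = (h-1) * (h+1) * Real.cos θ ^ 2 * u := by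
        rw [mul_pow, mul_pow, mul_pow, e1, e2, e3]
      have hcos2 : Real.cos θ ^ 2 = 1 - s ^ 2 := by linarith
      rw [expand, hcos2, hu_def, hk_def]
      field_simp
      ring
    have hsqrtfac : Real.sqrt ((h - (h - 1) * s ^ 2) ^ 2 - 1)
        = Real.sqrt (h-1) * Real.sqrt (h+1) * Real.cos θ * Real.sqrt u := by
      rw [hfac, Real.sqrt_sq (by positivity)]
    have hgamval : h - (h - 1) * s ^ 2 = (h + 1) * u - 1 := by
      rw [hu_def, hk_def]; field_simp; ring
    have hsu : Real.sqrt u ≠ 0 := by positivity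
    have hsu2 : Real.sqrt u * Real.sqrt u = u := Real.mul_self_sqrt hu.le
    have h1ne : Real.sqrt (h-1) ≠ 0 := by positivity
    have h2ne : Real.sqrt (h+1) ≠ 0 := by positivity
    have hF' : F θ = ((h + 1) * u - 1) / Real.sqrt u := by
      rw [hF_def]
      simp only
      rw [eq_div_iff hsu, sub_mul, one_div, inv_mul_cancel₀ hsu]
      rw [mul_assoc, hsu2]
    show |a * Real.cos θ| * g (a * s) = C * F θ
    rw [abs_of_pos (by positivity), hg_def]
    simp only
    rw [hgam, hsqrtfac, hgamval, hF', hC_def]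
    field_simp
  -- rewrite the substituted integral using the pointwise identity
  have hIoo : (∫ x in Ioo (-(π/2)) (π/2), |a * Real.cos x| • g (a * Real.sin x))
      = ∫ x in Ioo (-(π/2)) (π/2), C * F x :=
    MeasureTheory.setIntegral_congr_fun measurableSet_Ioo hpt
  have hL : (∫ x in (-a)..a, g x) = ∫ x in Ioo (-a) a, g x := by
    rw [intervalIntegral.integral_of_le (by linarith), MeasureTheory.integral_Ioc_eq_integral_Ioo]
  have hR : (∫ x in Ioo (-(π/2)) (π/2), C * F x) = ∫ x in (-(π/2))..(π/2), C * F x := by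
    rw [intervalIntegral.integral_of_le (by linarith [Real.pi_pos]),
      MeasureTheory.integral_Ioc_eq_integral_Ioo]
  -- continuity of F
  have hucont : Continuous fun θ : ℝ => Real.sqrt (1 - k * Real.sin θ ^ 2) :=
    Real.continuous_sqrt.comp (continuous_const.sub (continuous_const.mul (Real.continuous_sin.pow 2)))
  have hFcont : Continuous F := by
    rw [hF_def]
    exact ((continuous_const.mul hucont).sub
      (continuous_const.div hucont fun x => ne_of_gt (Real.sqrt_pos.mpr (hu_pos x))))
  -- evenness
  have hFeven : ∀ x : ℝ, F (-x) = F x := by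
    intro x
    have hs2 : Real.sin (-x) ^ 2 = Real.sin x ^ 2 := by rw [Real.sin_neg]; ring
    simp only [hF_def, hs2]
  have hneg : (∫ x in (-(π/2))..(0:ℝ), F x) = ∫ x in (0:ℝ)..(π/2), F x := by
    have hcn := intervalIntegral.integral_comp_neg (a := (0:ℝ)) (b := π/2) (f := F)
    simp only [hFeven, neg_zero] at hcn
    rw [← hcn]
  have hsplit : (∫ x in (-(π/2))..(π/2), F x)
      = 2 * ∫ x in (0:ℝ)..(π/2), F x := by
    rw [← intervalIntegral.integral_add_adjacent_intervals
      (hFcont.intervalIntegrable (-(π/2)) 0) (hFcont.intervalIntegrable 0 (π/2)), hneg]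
    ring
  -- split F into the two elliptic integrands
  have hsub2 : (∫ x in (0:ℝ)..(π/2), F x)
      = (h+1) * (∫ θ in (0:ℝ)..(π/2), Real.sqrt (1 - k * Real.sin θ ^ 2))
        - ∫ θ in (0:ℝ)..(π/2), 1 / Real.sqrt (1 - k * Real.sin θ ^ 2) := by
    have hI1 : IntervalIntegrable (fun θ => (h+1) * Real.sqrt (1 - k * Real.sin θ ^ 2))
        volume 0 (π/2) := (continuous_const.mul hucont).intervalIntegrable _ _
    have hI2 : IntervalIntegrable (fun θ => 1 / Real.sqrt (1 - k * Real.sin θ ^ 2))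
        volume 0 (π/2) :=
      (continuous_const.div hucont fun x =>
        ne_of_gt (Real.sqrt_pos.mpr (hu_pos x))).intervalIntegrable _ _
    rw [hF_def]
    rw [intervalIntegral.integral_sub hI1 hI2, intervalIntegral.integral_const_mul]
  -- the coefficient identity
  set c := Real.sqrt ((h + 1) / (2 * M)) with hc_def
  have hCc : C = 2 * c / (h + 1) := by
    rw [eq_div_iff (ne_of_gt hh2)]
    have hCpos : 0 ≤ C * (h + 1) := by positivity
    have hcpos : 0 ≤ 2 * c := by positivity
    have hsq : (C * (h + 1)) ^ 2 = (2 * c) ^ 2 := by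
      rw [mul_pow, mul_pow, hC_def, div_pow, mul_pow, Real.sq_sqrt hh1.le,
        Real.sq_sqrt hh2.le, ha2, hc_def, Real.sq_sqrt (by positivity : (0:ℝ) ≤ (h+1)/(2*M))]
      field_simp
    calc C * (h + 1) = Real.sqrt ((C * (h + 1)) ^ 2) := (Real.sqrt_sq hCpos).symm
      _ = Real.sqrt ((2 * c) ^ 2) := by rw [hsq]
      _ = 2 * c := Real.sqrt_sq hcpos
  -- assemble
  rw [hsqk]
  rw [hL, hsub, hIoo, hR, intervalIntegral.integral_const_mul, hsplit, hsub2, hCc]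
  field_simp
  ring
end

section
/- Let ξ₀ < ξ_f and ŝ_i : [ξ₀, ξ_f] → [0, ∞) be C¹ with ŝ_i > 0 on [ξ₀, ξ_f), ŝ_i(ξ_f) = 0, and ŝ_i'(ξ_f) = −A for some A > 0. Let ẑ_i : [ξ₀, ξ_f) → ℝ be differentiable with ẑ_i'(ξ) = (1 − ŝ_i(ξ)²)/(2 ŝ_i(ξ)²), and set γ_i(ξ) := (1 + ŝ_i(ξ)²)/(2 ŝ_i(ξ)). Then lim_{ξ → ξ_f⁻} (ξ_f − ξ) ẑ_i(ξ) = 1/(2A²) and lim_{ξ → ξ_f⁻} γ_i(ξ)/ẑ_i(ξ) = A. In particular ẑ_i(ξ) → +∞ and γ_i(ξ) → +∞ as ξ → ξ_f⁻, and the energy γ_i grows asymptotically proportionally to the travelled distance ẑ_i with rate A. -/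
open Filter Set Topology

set_option maxHeartbeats 2000000 in
/-- If `ŝ_i` is C¹ on `[ξ₀,ξ_f]`, positive on `[ξ₀,ξ_f)`, vanishing at `ξ_f`
with slope `-A < 0`, and `ẑ_i' = (1-ŝ_i²)/(2ŝ_i²)`, then
`(ξ_f-ξ) ẑ_i(ξ) → 1/(2A²)` and `γ_i/ẑ_i → A` as `ξ → ξ_f⁻`; in particular
`ẑ_i → +∞` and `γ_i → +∞`. -/
theorem stmt_17 (ξ₀ ξf A : ℝ) (hlt : ξ₀ < ξf) (hA : 0 < A)
    (si si' zi : ℝ → ℝ)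
    (hsi_nonneg : ∀ ξ ∈ Set.Icc ξ₀ ξf, 0 ≤ si ξ)
    (hsi_deriv : ∀ ξ ∈ Set.Icc ξ₀ ξf, HasDerivWithinAt si (si' ξ) (Set.Icc ξ₀ ξf) ξ)
    (hsi'_cont : ContinuousOn si' (Set.Icc ξ₀ ξf))
    (hsi_pos : ∀ ξ ∈ Set.Ico ξ₀ ξf, 0 < si ξ)
    (hsi_f : si ξf = 0)
    (hsi'_f : si' ξf = -A)
    (hzi : ∀ ξ ∈ Set.Ico ξ₀ ξf,
      HasDerivWithinAt zi ((1 - (si ξ) ^ 2) / (2 * (si ξ) ^ 2)) (Set.Ico ξ₀ ξf) ξ) :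
    Filter.Tendsto (fun ξ => (ξf - ξ) * zi ξ) (nhdsWithin ξf (Set.Iio ξf))
      (nhds (1 / (2 * A ^ 2))) ∧
    Filter.Tendsto (fun ξ => ((1 + (si ξ) ^ 2) / (2 * si ξ)) / zi ξ)
      (nhdsWithin ξf (Set.Iio ξf)) (nhds A) ∧
    Filter.Tendsto zi (nhdsWithin ξf (Set.Iio ξf)) Filter.atTop ∧
    Filter.Tendsto (fun ξ => (1 + (si ξ) ^ 2) / (2 * si ξ))
      (nhdsWithin ξf (Set.Iio ξf)) Filter.atTop := by
  have hAne : A ≠ 0 := hA.ne'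
  have hξf : ξf ∈ Set.Icc ξ₀ ξf := ⟨hlt.le, le_rfl⟩
  have hle_filter : (𝓝[<] ξf : Filter ℝ) ≤ 𝓝[Set.Icc ξ₀ ξf \ {ξf}] ξf := by
    rw [← nhdsWithin_Ico_eq_nhdsLT hlt]
    exact nhdsWithin_mono _ (fun x hx => ⟨⟨hx.1, hx.2.le⟩, hx.2.ne⟩)
  -- step 1 : slope tendsto
  have hder := hsi_deriv ξf hξf
  rw [hasDerivWithinAt_iff_tendsto_slope, hsi'_f] at hder
  have hslope : Tendsto (slope si ξf) (𝓝[<] ξf) (𝓝 (-A)) := hder.mono_left hle_filter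
  have hr : Tendsto (fun ξ => si ξ / (ξf - ξ)) (𝓝[<] ξf) (𝓝 A) := by
    have h := hslope.neg
    rw [neg_neg] at h
    refine h.congr' ?_
    filter_upwards [self_mem_nhdsWithin] with x hx
    have : (ξf : ℝ) - x = -(x - ξf) := by ring
    rw [slope_def_field, hsi_f, sub_zero, this, div_neg]
  have hsi0 : Tendsto si (𝓝[<] ξf) (𝓝 0) := by
    have := (hsi_deriv ξf hξf).continuousWithinAt
    rw [ContinuousWithinAt, hsi_f] at this
    refine this.mono_left ?_
    rw [← nhdsWithin_Ico_eq_nhdsLT hlt]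
    exact nhdsWithin_mono _ Set.Ico_subset_Icc_self
  have hmemIoo : ∀ᶠ ξ in 𝓝[<] ξf, ξ ∈ Set.Ioo ξ₀ ξf := by
    filter_upwards [self_mem_nhdsWithin,
      mem_nhdsWithin_of_mem_nhds (Ioi_mem_nhds hlt)] with ξ h1 h2
    exact ⟨h2, h1⟩
  -- continuity and derivative facts for zi
  have hziC : ContinuousOn zi (Set.Ico ξ₀ ξf) := fun x hx => (hzi x hx).continuousWithinAt
  have hziAt : ∀ x ∈ Set.Ioo ξ₀ ξf,
      HasDerivAt zi ((1 - si x ^ 2) / (2 * si x ^ 2)) x := fun x hx =>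
    (hzi x ⟨hx.1.le, hx.2⟩).hasDerivAt (Ico_mem_nhds hx.1 hx.2)
  have hgcAt : ∀ c : ℝ, ∀ x : ℝ, x < ξf →
      HasDerivAt (fun y => c * (ξf - y)⁻¹) (c / (ξf - x) ^ 2) x := by
    intro c x hx
    have h1 : HasDerivAt (fun y : ℝ => ξf - y) (-1) x := by
      simpa using (hasDerivAt_id x).const_sub ξf
    have h2 := (h1.inv (sub_ne_zero.2 hx.ne')).const_mul c
    rw [show c / (ξf - x) ^ 2 = c * (- -1 / (ξf - x) ^ 2) by ring]
    exact h2
  -- main quantitative estimate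
  have main : ∀ ε : ℝ, 0 < ε → ε < A → ε < 1 → ∃ K1 K2 : ℝ, ∀ᶠ ξ in 𝓝[<] ξf,
      (1 - ε ^ 2) / (2 * (A + ε) ^ 2) + (ξf - ξ) * K1 ≤ (ξf - ξ) * zi ξ ∧
      (ξf - ξ) * zi ξ ≤ 1 / (2 * (A - ε) ^ 2) + (ξf - ξ) * K2 := by
    intro ε hε hεA hε1
    set c1 := (1 - ε ^ 2) / (2 * (A + ε) ^ 2) with hc1
    set c2 := 1 / (2 * (A - ε) ^ 2) with hc2
    have hband : ∀ᶠ ξ in 𝓝[<] ξf, ξ ∈ Set.Ioo ξ₀ ξf ∧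
        (A - ε) * (ξf - ξ) ≤ si ξ ∧ si ξ ≤ (A + ε) * (ξf - ξ) ∧ si ξ ≤ ε := by
      have h1 : ∀ᶠ ξ in 𝓝[<] ξf, si ξ / (ξf - ξ) ∈ Set.Ioo (A - ε) (A + ε) :=
        hr (Ioo_mem_nhds (by linarith) (by linarith))
      have h2 : ∀ᶠ ξ in 𝓝[<] ξf, si ξ < ε := hsi0.eventually (eventually_lt_nhds hε)
      filter_upwards [h1, h2, hmemIoo, self_mem_nhdsWithin] with ξ h1 h2 h3 h4
      have hd : (0:ℝ) < ξf - ξ := sub_pos.2 h4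
      have hmul := div_mul_cancel₀ (si ξ) hd.ne'
      refine ⟨h3, ?_, ?_, h2.le⟩
      · nlinarith [h1.1]
      · nlinarith [h1.2]
    rcases mem_nhdsLT_iff_exists_Ioo_subset.1 hband with ⟨a, ha, hsub⟩
    obtain ⟨ξ1, hξ1a, hξ1f⟩ := exists_between (show max a ξ₀ < ξf from max_lt ha hlt)
    have hξ1₀ : ξ₀ < ξ1 := lt_of_le_of_lt (le_max_right a ξ₀) hξ1a
    have hP : ∀ x ∈ Set.Ico ξ1 ξf, x ∈ Set.Ioo ξ₀ ξf ∧
        (A - ε) * (ξf - x) ≤ si x ∧ si x ≤ (A + ε) * (ξf - x) ∧ si x ≤ ε := fun x hx =>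
      hsub ⟨lt_of_le_of_lt (le_max_left a ξ₀) (lt_of_lt_of_le hξ1a hx.1), hx.2⟩
    have hBound : ∀ x ∈ Set.Ico ξ1 ξf,
        c1 / (ξf - x) ^ 2 ≤ (1 - si x ^ 2) / (2 * si x ^ 2) ∧
        (1 - si x ^ 2) / (2 * si x ^ 2) ≤ c2 / (ξf - x) ^ 2 := by
      intro x hx
      obtain ⟨hxI, hlo, hhi, hsm⟩ := hP x hx
      have hd : (0:ℝ) < ξf - x := sub_pos.2 hxI.2
      have hs : 0 < si x := hsi_pos x ⟨hxI.1.le, hxI.2⟩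
      have hsq : si x ^ 2 ≤ ε ^ 2 := by nlinarith
      have hs2 : (0:ℝ) < 2 * si x ^ 2 := by have := pow_pos hs 2; linarith
      have hAε : (0:ℝ) < A - ε := sub_pos.2 hεA
      constructor
      · rw [hc1, div_div]
        apply div_le_div₀ (by nlinarith) (by linarith) hs2
          (by nlinarith [pow_le_pow_left₀ hs.le hhi 2])
      · rw [hc2, div_div]
        apply div_le_div₀ (by norm_num) (by nlinarith [sq_nonneg (si x)])
          (mul_pos (mul_pos two_pos (pow_pos hAε 2)) (pow_pos hd 2))
          (by nlinarith [pow_le_pow_left₀ (mul_nonneg hAε.le hd.le) hlo 2])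
    -- comparison lemma
    have key : ∀ c : ℝ,
        (∀ x ∈ Set.Ioo ξ1 ξf, c / (ξf - x) ^ 2 ≤ (1 - si x ^ 2) / (2 * si x ^ 2)) →
        ∀ x ∈ Set.Ico ξ1 ξf, zi ξ1 - c * (ξf - ξ1)⁻¹ ≤ zi x - c * (ξf - x)⁻¹ := by
      intro c hle x hx
      have hmono : MonotoneOn (fun y => zi y - c * (ξf - y)⁻¹) (Set.Ico ξ1 ξf) := by
        have hdiff : ∀ y ∈ Set.Ioo ξ1 ξf, HasDerivAt (fun y => zi y - c * (ξf - y)⁻¹)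
            ((1 - si y ^ 2) / (2 * si y ^ 2) - c / (ξf - y) ^ 2) y := fun y hy =>
          (hziAt y ⟨lt_of_lt_of_le hξ1₀ hy.1.le, hy.2⟩).sub (hgcAt c y hy.2)
        apply monotoneOn_of_deriv_nonneg (convex_Ico _ _)
        · refine ContinuousOn.sub (hziC.mono ?_) ?_
          · exact fun y hy => ⟨hξ1₀.le.trans hy.1, hy.2⟩
          · exact fun y hy => ((hgcAt c y hy.2).continuousAt).continuousWithinAt
        · rw [interior_Ico]
          exact fun y hy => ((hdiff y hy).differentiableAt).differentiableWithinAt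
        · rw [interior_Ico]
          intro y hy
          rw [(hdiff y hy).deriv]
          have := hle y hy
          linarith
      exact hmono ⟨le_rfl, hξ1f⟩ hx hx.1
    have key2 : ∀ c : ℝ,
        (∀ x ∈ Set.Ioo ξ1 ξf, (1 - si x ^ 2) / (2 * si x ^ 2) ≤ c / (ξf - x) ^ 2) →
        ∀ x ∈ Set.Ico ξ1 ξf, zi x - c * (ξf - x)⁻¹ ≤ zi ξ1 - c * (ξf - ξ1)⁻¹ := by
      intro c hle x hx
      have hanti : AntitoneOn (fun y => zi y - c * (ξf - y)⁻¹) (Set.Ico ξ1 ξf) := by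
        have hdiff : ∀ y ∈ Set.Ioo ξ1 ξf, HasDerivAt (fun y => zi y - c * (ξf - y)⁻¹)
            ((1 - si y ^ 2) / (2 * si y ^ 2) - c / (ξf - y) ^ 2) y := fun y hy =>
          (hziAt y ⟨lt_of_lt_of_le hξ1₀ hy.1.le, hy.2⟩).sub (hgcAt c y hy.2)
        apply antitoneOn_of_deriv_nonpos (convex_Ico _ _)
        · refine ContinuousOn.sub (hziC.mono ?_) ?_
          · exact fun y hy => ⟨hξ1₀.le.trans hy.1, hy.2⟩
          · exact fun y hy => ((hgcAt c y hy.2).continuousAt).continuousWithinAt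
        · rw [interior_Ico]
          exact fun y hy => ((hdiff y hy).differentiableAt).differentiableWithinAt
        · rw [interior_Ico]
          intro y hy
          rw [(hdiff y hy).deriv]
          have := hle y hy
          linarith
      exact hanti ⟨le_rfl, hξ1f⟩ hx hx.1
    refine ⟨zi ξ1 - c1 * (ξf - ξ1)⁻¹, zi ξ1 - c2 * (ξf - ξ1)⁻¹, ?_⟩
    have hevI : ∀ᶠ ξ in 𝓝[<] ξf, ξ ∈ Set.Ioo ξ1 ξf := Ioo_mem_nhdsLT_of_mem ⟨hξ1f, le_rfl⟩
    filter_upwards [hevI] with ξ hξ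
    have hξIco : ξ ∈ Set.Ico ξ1 ξf := ⟨hξ.1.le, hξ.2⟩
    have hd : (0:ℝ) < ξf - ξ := sub_pos.2 hξ.2
    have hdc : ∀ c : ℝ, (ξf - ξ) * (c * (ξf - ξ)⁻¹) = c := by
      intro c; rw [mul_comm c, ← mul_assoc, mul_inv_cancel₀ hd.ne', one_mul]
    constructor
    · have h := key c1 (fun x hx => (hBound x ⟨hx.1.le, hx.2⟩).1) ξ hξIco
      have h2 := mul_le_mul_of_nonneg_left (show c1 * (ξf - ξ)⁻¹ + (zi ξ1 - c1 * (ξf - ξ1)⁻¹) ≤ zi ξ by linarith) hd.le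
      calc c1 + (ξf - ξ) * (zi ξ1 - c1 * (ξf - ξ1)⁻¹)
          = (ξf - ξ) * (c1 * (ξf - ξ)⁻¹ + (zi ξ1 - c1 * (ξf - ξ1)⁻¹)) := by
            rw [mul_add, hdc]
        _ ≤ (ξf - ξ) * zi ξ := h2
    · have h := key2 c2 (fun x hx => (hBound x ⟨hx.1.le, hx.2⟩).2) ξ hξIco
      have h2 := mul_le_mul_of_nonneg_left (show zi ξ ≤ c2 * (ξf - ξ)⁻¹ + (zi ξ1 - c2 * (ξf - ξ1)⁻¹) by linarith) hd.le
      calc (ξf - ξ) * zi ξ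
          ≤ (ξf - ξ) * (c2 * (ξf - ξ)⁻¹ + (zi ξ1 - c2 * (ξf - ξ1)⁻¹)) := h2
        _ = c2 + (ξf - ξ) * (zi ξ1 - c2 * (ξf - ξ1)⁻¹) := by rw [mul_add, hdc]
  -- small-ε helper
  have hsmallε : ∀ᶠ ε in 𝓝[>] (0:ℝ), 0 < ε ∧ ε < A ∧ ε < 1 := by
    filter_upwards [Ioo_mem_nhdsGT_of_mem (show (0:ℝ) ∈ Set.Ico 0 (min A 1) from
      ⟨le_rfl, lt_min hA one_pos⟩)] with ε hε
    exact ⟨hε.1, lt_of_lt_of_le hε.2 (min_le_left _ _), lt_of_lt_of_le hε.2 (min_le_right _ _)⟩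
  have hzeroK : ∀ K : ℝ, Tendsto (fun ξ => (ξf - ξ) * K) (𝓝[<] ξf) (𝓝 0) := by
    intro K
    have : Tendsto (fun ξ : ℝ => (ξf - ξ) * K) (𝓝 ξf) (𝓝 ((ξf - ξf) * K)) :=
      (Continuous.tendsto ((continuous_const.sub continuous_id).mul continuous_const) ξf)
    simpa using this.mono_left nhdsWithin_le_nhds
  -- first limit
  have h1 : Tendsto (fun ξ => (ξf - ξ) * zi ξ) (𝓝[<] ξf) (𝓝 (1 / (2 * A ^ 2))) := by
    refine tendsto_order.2 ⟨fun b hb => ?_, fun b hb => ?_⟩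
    · -- b < L, use lower bound
      have hcont : Tendsto (fun ε : ℝ => (1 - ε ^ 2) / (2 * (A + ε) ^ 2)) (𝓝[>] 0)
          (𝓝 (1 / (2 * A ^ 2))) := by
        have hne0 : (2:ℝ) * (A + 0) ^ 2 ≠ 0 := by
          have hA0 : A + 0 ≠ 0 := by simpa using hAne
          positivity
        have hc : ContinuousAt (fun ε : ℝ => (1 - ε ^ 2) / (2 * (A + ε) ^ 2)) 0 :=
          ContinuousAt.div (continuous_const.sub (continuous_pow 2)).continuousAt
            (continuous_const.mul ((continuous_const.add continuous_id).pow 2)).continuousAt hne0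
        simpa using hc.tendsto.mono_left (nhdsWithin_le_nhds (s := Set.Ioi (0:ℝ)))
      set m := (b + 1 / (2 * A ^ 2)) / 2 with hm
      have hbm : b < m := by
        rw [hm]; linarith
      have hmL : m < 1 / (2 * A ^ 2) := by rw [hm]; linarith
      obtain ⟨ε, hεm, hε0, hεA, hε1⟩ :=
        ((hcont.eventually (eventually_gt_nhds hmL)).and hsmallε).exists
      obtain ⟨K1, K2, hKK⟩ := main ε hε0 hεA hε1
      have hev := (hzeroK K1).eventually (eventually_gt_nhds (show b - m < 0 by linarith))
      filter_upwards [hKK, hev] with ξ hKKξ hevξ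
      have := hKKξ.1
      linarith
    · have hcont : Tendsto (fun ε : ℝ => 1 / (2 * (A - ε) ^ 2)) (𝓝[>] 0)
          (𝓝 (1 / (2 * A ^ 2))) := by
        have hne0 : (2:ℝ) * (A - 0) ^ 2 ≠ 0 := by
          have hA0 : A - 0 ≠ 0 := by simpa using hAne
          positivity
        have hc : ContinuousAt (fun ε : ℝ => 1 / (2 * (A - ε) ^ 2)) 0 :=
          ContinuousAt.div continuousAt_const
            (continuous_const.mul ((continuous_const.sub continuous_id).pow 2)).continuousAt hne0
        simpa using hc.tendsto.mono_left (nhdsWithin_le_nhds (s := Set.Ioi (0:ℝ)))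
      set m := (b + 1 / (2 * A ^ 2)) / 2 with hm
      have hbm : m < b := by rw [hm]; linarith
      have hmL : 1 / (2 * A ^ 2) < m := by rw [hm]; linarith
      obtain ⟨ε, hεm, hε0, hεA, hε1⟩ :=
        ((hcont.eventually (eventually_lt_nhds hmL)).and hsmallε).exists
      obtain ⟨K1, K2, hKK⟩ := main ε hε0 hεA hε1
      have hev := (hzeroK K2).eventually (eventually_lt_nhds (show (0:ℝ) < b - m by linarith))
      filter_upwards [hKK, hev] with ξ hKKξ hevξ
      have := hKKξ.2
      linarith
  -- second auxiliary limit: (ξf-ξ)*γ → 1/(2A)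
  have h2 : Tendsto (fun ξ => (ξf - ξ) * ((1 + si ξ ^ 2) / (2 * si ξ))) (𝓝[<] ξf)
      (𝓝 (1 / (2 * A))) := by
    have hnum : Tendsto (fun ξ => 1 + si ξ ^ 2) (𝓝[<] ξf) (𝓝 (1 + 0 ^ 2)) :=
      tendsto_const_nhds.add (hsi0.pow 2)
    have hden : Tendsto (fun ξ => 2 * (si ξ / (ξf - ξ))) (𝓝[<] ξf) (𝓝 (2 * A)) :=
      hr.const_mul 2
    have hquot := hnum.div hden (by positivity)
    have heq : ∀ ξ : ℝ, (1 + si ξ ^ 2) / (2 * (si ξ / (ξf - ξ)))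
        = (ξf - ξ) * ((1 + si ξ ^ 2) / (2 * si ξ)) := by
      intro ξ
      rw [← mul_div_assoc, div_div_eq_mul_div, ← mul_div_assoc]; ring
    have : (1 + (0:ℝ) ^ 2) / (2 * A) = 1 / (2 * A) := by norm_num
    rw [this] at hquot
    exact hquot.congr heq
  have hLpos : (0:ℝ) < 1 / (2 * A ^ 2) := by positivity
  refine ⟨h1, ?_, ?_, ?_⟩
  · -- γ / zi → A
    have hne : (1:ℝ) / (2 * A ^ 2) ≠ 0 := hLpos.ne'
    have hdiv := h2.div h1 hne
    have hval : (1 / (2 * A)) / (1 / (2 * A ^ 2)) = A := by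
      field_simp
    rw [hval] at hdiv
    refine hdiv.congr' ?_
    filter_upwards [self_mem_nhdsWithin] with ξ hξ
    have hd : (ξf : ℝ) - ξ ≠ 0 := (sub_pos.2 (Set.mem_Iio.1 hξ)).ne'
    simp only [Pi.div_apply]
    rw [mul_div_mul_left _ _ hd]
  · -- zi → atTop
    have hinv : Tendsto (fun ξ => (ξf - ξ)⁻¹) (𝓝[<] ξf) atTop := by
      have h0 : Tendsto (fun ξ => ξf - ξ) (𝓝[<] ξf) (𝓝[>] 0) := by
        apply tendsto_nhdsWithin_of_tendsto_nhds_of_eventually_within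
        · have : Tendsto (fun ξ : ℝ => ξf - ξ) (𝓝 ξf) (𝓝 (ξf - ξf)) :=
            Continuous.tendsto (continuous_const.sub continuous_id) ξf
          simpa using this.mono_left nhdsWithin_le_nhds
        · filter_upwards [self_mem_nhdsWithin] with ξ hξ
          exact Set.mem_Ioi.2 (sub_pos.2 (Set.mem_Iio.1 hξ))
      exact tendsto_inv_nhdsGT_zero.comp h0
    have := Filter.Tendsto.pos_mul_atTop hLpos h1 hinv
    refine this.congr' ?_
    filter_upwards [self_mem_nhdsWithin] with ξ hξ
    have hd : (ξf : ℝ) - ξ ≠ 0 := (sub_pos.2 (Set.mem_Iio.1 hξ)).ne'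
    rw [mul_comm (ξf - ξ) (zi ξ), mul_assoc, mul_inv_cancel₀ hd, mul_one]
  · -- γ → atTop
    have hinv : Tendsto (fun ξ => (ξf - ξ)⁻¹) (𝓝[<] ξf) atTop := by
      have h0 : Tendsto (fun ξ => ξf - ξ) (𝓝[<] ξf) (𝓝[>] 0) := by
        apply tendsto_nhdsWithin_of_tendsto_nhds_of_eventually_within
        · have : Tendsto (fun ξ : ℝ => ξf - ξ) (𝓝 ξf) (𝓝 (ξf - ξf)) :=
            Continuous.tendsto (continuous_const.sub continuous_id) ξf
          simpa using this.mono_left nhdsWithin_le_nhds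
        · filter_upwards [self_mem_nhdsWithin] with ξ hξ
          exact Set.mem_Ioi.2 (sub_pos.2 (Set.mem_Iio.1 hξ))
      exact tendsto_inv_nhdsGT_zero.comp h0
    have := Filter.Tendsto.pos_mul_atTop (show (0:ℝ) < 1 / (2 * A) by positivity) h2 hinv
    refine this.congr' ?_
    filter_upwards [self_mem_nhdsWithin] with ξ hξ
    have hd : (ξf : ℝ) - ξ ≠ 0 := (sub_pos.2 (Set.mem_Iio.1 hξ)).ne'
    rw [mul_comm (ξf - ξ) _, mul_assoc, mul_inv_cancel₀ hd, mul_one]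
end
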